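/- arXiv:1808.00445 — 7 statements merged into one kernel-verified Lean document; each statement's English description precedes it below -/
import Mathlib

section
/- For any perfect matching M on {1,...,2n}, the product of minors Δ_M lies in the ℂ-span of the products Δ_N where N ranges over noncrossing perfect matchings of {1,...,2n}; moreover Δ_M is a nonnegative integer combination of such Δ_N. -/
open MvPolynomial Finset

noncomputable section

/-- The polynomial ring ℂ[x_{ij}] for a 2 × (2n) matrix of indeterminates. -/
abbrev PolyR (n : ℕ) := MvPolynomial (Fin 2 × Fin (2 * n)) ℂ

/-- The 2×2 minor Δ_{ab} = x_{1a} x_{2b} - x_{1b} x_{2a} (rows 0,1 in 0-indexing). -/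
def Delta {n : ℕ} (a b : Fin (2 * n)) : PolyR n :=
  X (0, a) * X (1, b) - X (0, b) * X (1, a)

/-- A perfect matching on {1,…,2n}, encoded as a fixed-point-free involution. -/
structure PM (n : ℕ) where
  f : Fin (2 * n) → Fin (2 * n)
  invol : ∀ i, f (f i) = i
  nofix : ∀ i, f i ≠ i

/-- The product Δ_M of the minors over the blocks of a perfect matching M. -/
def DeltaM {n : ℕ} (M : PM n) : PolyR n :=
  ∏ i ∈ Finset.univ.filter (fun i => i < M.f i), Delta i (M.f i)

/-- M is noncrossing: no a < b < c < d with a ∼ c and b ∼ d. -/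
def Noncrossing {n : ℕ} (M : PM n) : Prop :=
  ¬ ∃ a b c d : Fin (2 * n), a < b ∧ b < c ∧ c < d ∧ M.f a = c ∧ M.f b = d

/-- The number of crossing pairs a < b < c < d with a ∼ c, b ∼ d in M. -/
def crossings {n : ℕ} (M : PM n) : ℕ :=
  ((Finset.univ : Finset (Fin (2 * n) × Fin (2 * n))).filter
    (fun p => p.1 < p.2 ∧ p.2 < M.f p.1 ∧ M.f p.1 < M.f p.2)).card

-- Plücker
lemma plucker {n : ℕ} (a b c d : Fin (2 * n)) :
    Delta a c * Delta b d = Delta a b * Delta c d + Delta a d * Delta b c := by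
  simp only [Delta]; ring

/-- recouple: swap so that a↔b and (f a)↔(f b) are the new blocks. -/
def PM.repair {n : ℕ} (M : PM n) (a b c d : Fin (2 * n))
    (hfa : M.f a = c) (hfb : M.f b = d) (hab : a ≠ b) (hcb : c ≠ b) : PM n where
  f i := if i = a then b else if i = b then a else if i = c then d else if i = d then c else M.f i
  invol := by
    have hfc : M.f c = a := by rw [← hfa, M.invol]
    have hfd : M.f d = b := by rw [← hfb, M.invol]
    have hac : a ≠ c := fun h => M.nofix a (hfa ▸ h.symm)
    have hbd : b ≠ d := fun h => M.nofix b (hfb ▸ h.symm)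
    have had : a ≠ d := fun h => hcb (by rw [← hfa, h, hfd])
    have hcd : c ≠ d := fun h => hab (by rw [← hfc, h, hfd])
    intro i
    by_cases h1 : i = a
    · simp [h1, hab, hab.symm, hcb]
    · by_cases h2 : i = b
      · simp [h2, hab, hab.symm, hcb.symm, had.symm]
      · by_cases h3 : i = c
        · simp [h3, hcb, hac.symm, had.symm, hbd.symm, hcd, hcd.symm]
        · by_cases h4 : i = d
          · simp [h4, had.symm, hbd.symm, hcd.symm, hac, hcb, hac.symm]
          · have k1 : M.f i ≠ a := fun h => h3 (by rw [← M.invol i, h, hfa])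
            have k2 : M.f i ≠ b := fun h => h4 (by rw [← M.invol i, h, hfb])
            have k3 : M.f i ≠ c := fun h => h1 (by rw [← M.invol i, h, hfc])
            have k4 : M.f i ≠ d := fun h => h2 (by rw [← M.invol i, h, hfd])
            simp [h1, h2, h3, h4, k1, k2, k3, k4, M.invol]
  nofix := by
    have hfc : M.f c = a := by rw [← hfa, M.invol]
    have hac : a ≠ c := fun h => M.nofix a (hfa ▸ h.symm)
    have hbd : b ≠ d := fun h => M.nofix b (hfb ▸ h.symm)
    have hcd : c ≠ d := fun h => hab (by rw [← hfc, h, ← hfb, M.invol])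
    have had : a ≠ d := fun h => hcb (by rw [← hfa, h, ← hfb, M.invol])
    intro i
    by_cases h1 : i = a
    · simp [h1, hab.symm]
    · by_cases h2 : i = b
      · simp [h2, hab, hcb.symm, hab.symm]
      · by_cases h3 : i = c
        · simp [h3, hcb, hcd.symm, hac.symm]
        · by_cases h4 : i = d
          · simp [h4, hbd.symm, hcd, hcd.symm, had.symm, hac.symm, hcb]
          · simp [h1, h2, h3, h4, M.nofix i]

lemma repair_f {n : ℕ} (M : PM n) (a b c d : Fin (2 * n))
    (hfa : M.f a = c) (hfb : M.f b = d) (hab : a ≠ b) (hcb : c ≠ b) (i : Fin (2*n)) :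
    (M.repair a b c d hfa hfb hab hcb).f i =
      if i = a then b else if i = b then a else if i = c then d else if i = d then c else M.f i := rfl

@[to_additive]
lemma split_prod {n : ℕ} {β : Type*} [CommMonoid β] (F : Fin (2*n) → Fin (2*n) → β)
    (M : PM n) (a b : Fin (2*n)) (ha : a < M.f a) (hb : b < M.f b) (hab : a ≠ b) :
    ∏ i ∈ Finset.univ.filter (fun i => i < M.f i), F i (M.f i) =
      F a (M.f a) * F b (M.f b) *
        ∏ i ∈ (Finset.univ.filter (fun i => i < M.f i)) \ {a, b}, F i (M.f i) := by
  classical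
  set S := Finset.univ.filter (fun i => i < M.f i) with hS
  have haS : a ∈ S := by simp [hS, ha]
  have hbS : b ∈ S := by simp [hS, hb]
  have hSeq : S = insert a (insert b (S \ {a, b})) := by
    ext i
    simp only [Finset.mem_insert, Finset.mem_sdiff, Finset.mem_insert, Finset.mem_singleton]
    constructor
    · intro hi
      by_cases h1 : i = a
      · exact Or.inl h1
      · by_cases h2 : i = b
        · exact Or.inr (Or.inl h2)
        · exact Or.inr (Or.inr ⟨hi, fun h => (h.elim h1 h2)⟩)
    · rintro (rfl | rfl | ⟨hi, -⟩) <;> assumption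
  have h1 : b ∉ S \ {a, b} := by simp
  have h2 : a ∉ insert b (S \ {a, b}) := by simp [hab]
  conv_lhs => rw [hSeq]
  rw [Finset.prod_insert h2, Finset.prod_insert h1, mul_assoc]

def len {n : ℕ} (M : PM n) : ℕ :=
  ∑ i ∈ Finset.univ.filter (fun i => i < M.f i), ((M.f i).val - i.val)

def qlen {n : ℕ} (M : PM n) : ℕ :=
  ∑ i ∈ Finset.univ.filter (fun i => i < M.f i), ((M.f i).val - i.val) ^ 2

def meas {n : ℕ} (M : PM n) : ℕ := (8 * n ^ 3 + 1) * len M + (8 * n ^ 3 - qlen M)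

lemma qlen_le {n : ℕ} (M : PM n) : qlen M ≤ 8 * n ^ 3 := by
  have h1 : qlen M ≤ (Finset.univ.filter (fun i => i < M.f i)).card • (4 * n ^ 2) := by
    apply Finset.sum_le_card_nsmul
    intro i _
    have h2 : ((M.f i).val - i.val) ≤ 2 * n := by
      have := (M.f i).is_lt; omega
    calc ((M.f i).val - i.val) ^ 2 ≤ (2 * n) ^ 2 := Nat.pow_le_pow_left h2 2
      _ = 4 * n ^ 2 := by ring
  have h3 : (Finset.univ.filter (fun i => i < M.f i)).card ≤ 2 * n := by
    calc (Finset.univ.filter (fun i => i < M.f i)).card ≤ (Finset.univ : Finset (Fin (2*n))).card :=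
          Finset.card_filter_le _ _
      _ = 2 * n := by simp
  calc qlen M ≤ (Finset.univ.filter (fun i => i < M.f i)).card • (4 * n ^ 2) := h1
    _ = (Finset.univ.filter (fun i => i < M.f i)).card * (4 * n ^ 2) := by simp [smul_eq_mul]
    _ ≤ (2 * n) * (4 * n ^ 2) := Nat.mul_le_mul_right _ h3
    _ = 8 * n ^ 3 := by ring

lemma sq_ineq (a b c d : ℕ) (h1 : a < b) (h2 : b < c) (h3 : c < d) :
    (c - a) ^ 2 + (d - b) ^ 2 + 2 ≤ (d - a) ^ 2 + (c - b) ^ 2 := by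
  obtain ⟨p, rfl⟩ : ∃ p, b = a + p + 1 := ⟨b - a - 1, by omega⟩
  obtain ⟨q, rfl⟩ : ∃ q, c = (a + p + 1) + q + 1 := ⟨c - (a+p+1) - 1, by omega⟩
  obtain ⟨r, rfl⟩ : ∃ r, d = ((a + p + 1) + q + 1) + r + 1 := ⟨d - ((a+p+1)+q+1) - 1, by omega⟩
  have e1 : (a + p + 1 + q + 1) - a = p + q + 2 := by omega
  have e2 : (a + p + 1 + q + 1 + r + 1) - (a + p + 1) = q + r + 2 := by omega
  have e3 : (a + p + 1 + q + 1 + r + 1) - a = p + q + r + 3 := by omega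
  have e4 : (a + p + 1 + q + 1) - (a + p + 1) = q + 1 := by omega
  rw [e1, e2, e3, e4]
  nlinarith [Nat.zero_le p, Nat.zero_le r]

lemma key {n : ℕ} (M : PM n) (a b c d : Fin (2 * n))
    (hab : a < b) (hbc : b < c) (hcd : c < d) (hfa : M.f a = c) (hfb : M.f b = d) :
    ∃ N1 N2 : PM n, DeltaM M = DeltaM N1 + DeltaM N2 ∧ meas N1 < meas M ∧ meas N2 < meas M := by
  classical
  have hfc : M.f c = a := by rw [← hfa, M.invol]
  have hfd : M.f d = b := by rw [← hfb, M.invol]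
  have nab : a ≠ b := hab.ne
  have nac : a ≠ c := (hab.trans hbc).ne
  have nad : a ≠ d := ((hab.trans hbc).trans hcd).ne
  have nbc : b ≠ c := hbc.ne
  have nbd : b ≠ d := (hbc.trans hcd).ne
  have ncd : c ≠ d := hcd.ne
  set N1 : PM n := M.repair a b c d hfa hfb nab nbc.symm with hN1
  set N2 : PM n := M.repair a d c b hfa hfd nad ncd with hN2
  have hN1f : ∀ i, (N1.f i) = if i = a then b else if i = b then a else if i = c then d
      else if i = d then c else M.f i := fun i => rfl
  have hN2f : ∀ i, (N2.f i) = if i = a then d else if i = d then a else if i = c then b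
      else if i = b then c else M.f i := fun i => rfl
  have hN1a : N1.f a = b := by simp [hN1f]
  have hN1b : N1.f b = a := by simp [hN1f, nab.symm]
  have hN1c : N1.f c = d := by simp [hN1f, nac.symm, nbc.symm]
  have hN1d : N1.f d = c := by simp [hN1f, nad.symm, nbd.symm, ncd.symm]
  have hN2a : N2.f a = d := by simp [hN2f]
  have hN2b : N2.f b = c := by simp [hN2f, nab.symm, nbd, nbc]
  have hN2c : N2.f c = b := by simp [hN2f, nac.symm, ncd]
  have hN2d : N2.f d = a := by simp [hN2f, nad.symm]
  have hN1rest : ∀ i, i ≠ a → i ≠ b → i ≠ c → i ≠ d → N1.f i = M.f i := by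
    intro i h1 h2 h3 h4; simp [hN1f, h1, h2, h3, h4]
  have hN2rest : ∀ i, i ≠ a → i ≠ b → i ≠ c → i ≠ d → N2.f i = M.f i := by
    intro i h1 h2 h3 h4; simp [hN2f, h1, h2, h3, h4]
  -- the common rest set
  set T : Finset (Fin (2 * n)) := (Finset.univ.filter (fun i => i < M.f i)) \ {a, b} with hT
  have hTmem : ∀ i ∈ T, i ≠ a ∧ i ≠ b ∧ i ≠ c ∧ i ≠ d := by
    intro i hi
    rw [hT, Finset.mem_sdiff, Finset.mem_filter] at hi
    obtain ⟨⟨-, hlt⟩, hnotin⟩ := hi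
    simp only [Finset.mem_insert, Finset.mem_singleton, not_or] at hnotin
    refine ⟨hnotin.1, hnotin.2, ?_, ?_⟩
    · rintro rfl; rw [hfc] at hlt; exact absurd hlt (not_lt.mpr (hab.trans hbc).le)
    · rintro rfl; rw [hfd] at hlt; exact absurd hlt (not_lt.mpr (hbc.trans hcd).le)
  have hT1 : (Finset.univ.filter (fun i => i < N1.f i)) \ {a, c} = T := by
    ext j
    simp only [hT, Finset.mem_sdiff, Finset.mem_filter, Finset.mem_univ, true_and,
      Finset.mem_insert, Finset.mem_singleton, not_or]
    by_cases h1 : j = a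
    · simp [h1]
    · by_cases h2 : j = b
      · have l1 : ¬ (b < N1.f b) := by rw [hN1b]; exact not_lt.mpr hab.le
        simp [h2, l1]
      · by_cases h3 : j = c
        · have l1 : ¬ (c < M.f c) := by rw [hfc]; exact not_lt.mpr (hab.trans hbc).le
          simp [h3, l1]
        · by_cases h4 : j = d
          · have l1 : ¬ (d < N1.f d) := by rw [hN1d]; exact not_lt.mpr hcd.le
            have l2 : ¬ (d < M.f d) := by rw [hfd]; exact not_lt.mpr (hbc.trans hcd).le
            simp [h4, l1, l2]
          · rw [hN1rest j h1 h2 h3 h4]; tauto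
  have hT2 : (Finset.univ.filter (fun i => i < N2.f i)) \ {a, b} = T := by
    ext j
    simp only [hT, Finset.mem_sdiff, Finset.mem_filter, Finset.mem_univ, true_and,
      Finset.mem_insert, Finset.mem_singleton, not_or]
    by_cases h1 : j = a
    · simp [h1]
    · by_cases h2 : j = b
      · simp [h2]
      · by_cases h3 : j = c
        · have l1 : ¬ (c < N2.f c) := by rw [hN2c]; exact not_lt.mpr hbc.le
          have l2 : ¬ (c < M.f c) := by rw [hfc]; exact not_lt.mpr (hab.trans hbc).le
          simp [h3, l1, l2, nac.symm, nbc.symm]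
        · by_cases h4 : j = d
          · have l1 : ¬ (d < N2.f d) := by rw [hN2d]; exact not_lt.mpr ((hab.trans hbc).trans hcd).le
            have l2 : ¬ (d < M.f d) := by rw [hfd]; exact not_lt.mpr (hbc.trans hcd).le
            simp [h4, l1, l2, nad.symm, nbd.symm]
          · rw [hN2rest j h1 h2 h3 h4]
  refine ⟨N1, N2, ?_, ?_, ?_⟩
  · -- DeltaM identity
    have sM := split_prod Delta M a b (by rw [hfa]; exact hab.trans hbc)
      (by rw [hfb]; exact hbc.trans hcd) nab
    have sN1 := split_prod Delta N1 a c (by rw [hN1a]; exact hab)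
      (by rw [hN1c]; exact hcd) nac
    have sN2 := split_prod Delta N2 a b (by rw [hN2a]; exact (hab.trans hbc).trans hcd)
      (by rw [hN2b]; exact hbc) nab
    rw [hT1] at sN1
    rw [hT2] at sN2
    have c1 : ∏ i ∈ T, Delta i (N1.f i) = ∏ i ∈ T, Delta i (M.f i) :=
      Finset.prod_congr rfl (fun i hi => by
        obtain ⟨h1, h2, h3, h4⟩ := hTmem i hi; rw [hN1rest i h1 h2 h3 h4])
    have c2 : ∏ i ∈ T, Delta i (N2.f i) = ∏ i ∈ T, Delta i (M.f i) :=
      Finset.prod_congr rfl (fun i hi => by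
        obtain ⟨h1, h2, h3, h4⟩ := hTmem i hi; rw [hN2rest i h1 h2 h3 h4])
    rw [DeltaM, DeltaM, DeltaM, sM, sN1, sN2, c1, c2, hfa, hfb, hN1a, hN1c, hN2a, hN2b]
    linear_combination (∏ i ∈ T, Delta i (M.f i)) * plucker a b c d
  all_goals {
    have vab : (a : ℕ) < b := hab
    have vbc : (b : ℕ) < c := hbc
    have vcd : (c : ℕ) < d := hcd
    have lM := split_sum (fun i j => ((j : ℕ) - (i : ℕ))) M a b (by rw [hfa]; exact hab.trans hbc)
      (by rw [hfb]; exact hbc.trans hcd) nab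
    have qM := split_sum (fun i j => ((j : ℕ) - (i : ℕ)) ^ 2) M a b (by rw [hfa]; exact hab.trans hbc)
      (by rw [hfb]; exact hbc.trans hcd) nab
    have lN1 := split_sum (fun i j => ((j : ℕ) - (i : ℕ))) N1 a c (by rw [hN1a]; exact hab)
      (by rw [hN1c]; exact hcd) nac
    have qN1 := split_sum (fun i j => ((j : ℕ) - (i : ℕ)) ^ 2) N1 a c (by rw [hN1a]; exact hab)
      (by rw [hN1c]; exact hcd) nac
    have lN2 := split_sum (fun i j => ((j : ℕ) - (i : ℕ))) N2 a b
      (by rw [hN2a]; exact (hab.trans hbc).trans hcd) (by rw [hN2b]; exact hbc) nab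
    have qN2 := split_sum (fun i j => ((j : ℕ) - (i : ℕ)) ^ 2) N2 a b
      (by rw [hN2a]; exact (hab.trans hbc).trans hcd) (by rw [hN2b]; exact hbc) nab
    rw [hT1] at lN1 qN1
    rw [hT2] at lN2 qN2
    have c1 : ∑ i ∈ T, (((N1.f i) : ℕ) - (i : ℕ)) = ∑ i ∈ T, (((M.f i) : ℕ) - (i : ℕ)) :=
      Finset.sum_congr rfl (fun i hi => by
        obtain ⟨h1, h2, h3, h4⟩ := hTmem i hi; rw [hN1rest i h1 h2 h3 h4])
    have c2 : ∑ i ∈ T, (((N2.f i) : ℕ) - (i : ℕ)) = ∑ i ∈ T, (((M.f i) : ℕ) - (i : ℕ)) :=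
      Finset.sum_congr rfl (fun i hi => by
        obtain ⟨h1, h2, h3, h4⟩ := hTmem i hi; rw [hN2rest i h1 h2 h3 h4])
    have c3 : ∑ i ∈ T, (((N1.f i) : ℕ) - (i : ℕ)) ^ 2 = ∑ i ∈ T, (((M.f i) : ℕ) - (i : ℕ)) ^ 2 :=
      Finset.sum_congr rfl (fun i hi => by
        obtain ⟨h1, h2, h3, h4⟩ := hTmem i hi; rw [hN1rest i h1 h2 h3 h4])
    have c4 : ∑ i ∈ T, (((N2.f i) : ℕ) - (i : ℕ)) ^ 2 = ∑ i ∈ T, (((M.f i) : ℕ) - (i : ℕ)) ^ 2 :=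
      Finset.sum_congr rfl (fun i hi => by
        obtain ⟨h1, h2, h3, h4⟩ := hTmem i hi; rw [hN2rest i h1 h2 h3 h4])
    have e1 : len M = ((c : ℕ) - a) + ((d : ℕ) - b) + ∑ i ∈ T, (((M.f i) : ℕ) - (i : ℕ)) := by
      simp only [len]; rw [lM, hfa, hfb]
    have e2 : len N1 = ((b : ℕ) - a) + ((d : ℕ) - c) + ∑ i ∈ T, (((M.f i) : ℕ) - (i : ℕ)) := by
      simp only [len]; rw [lN1, hN1a, hN1c, c1]
    have e3 : len N2 = ((d : ℕ) - a) + ((c : ℕ) - b) + ∑ i ∈ T, (((M.f i) : ℕ) - (i : ℕ)) := by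
      simp only [len]; rw [lN2, hN2a, hN2b, c2]
    have f1 : qlen M = ((c : ℕ) - a) ^ 2 + ((d : ℕ) - b) ^ 2 + ∑ i ∈ T, (((M.f i) : ℕ) - (i : ℕ)) ^ 2 := by
      simp only [qlen]; rw [qM, hfa, hfb]
    have f2 : qlen N2 = ((d : ℕ) - a) ^ 2 + ((c : ℕ) - b) ^ 2 + ∑ i ∈ T, (((M.f i) : ℕ) - (i : ℕ)) ^ 2 := by
      simp only [qlen]; rw [qN2, hN2a, hN2b, c4]
    have hB1 : qlen N1 ≤ 8 * n ^ 3 := qlen_le N1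
    have hB2 : qlen N2 ≤ 8 * n ^ 3 := qlen_le N2
    have hBM : qlen M ≤ 8 * n ^ 3 := qlen_le M
    first
    | -- meas N1 < meas M
      ( have hlen : len N1 < len M := by omega
        have step : meas N1 < (8 * n ^ 3 + 1) * len M := by
          calc meas N1 = (8 * n ^ 3 + 1) * len N1 + (8 * n ^ 3 - qlen N1) := rfl
            _ ≤ (8 * n ^ 3 + 1) * len N1 + 8 * n ^ 3 := by omega
            _ < (8 * n ^ 3 + 1) * (len N1 + 1) := by rw [Nat.mul_add]; omega
            _ ≤ (8 * n ^ 3 + 1) * len M := Nat.mul_le_mul_left _ hlen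
        calc meas N1 < (8 * n ^ 3 + 1) * len M := step
          _ ≤ meas M := Nat.le_add_right _ _ )
    | -- meas N2 < meas M
      ( have hlen : len N2 = len M := by omega
        have hsq := sq_ineq (a : ℕ) b c d vab vbc vcd
        have hq : qlen M + 2 ≤ qlen N2 := by omega
        have : meas N2 = (8 * n ^ 3 + 1) * len M + (8 * n ^ 3 - qlen N2) := by
          rw [meas, hlen]
        rw [this, meas]
        have : 8 * n ^ 3 - qlen N2 < 8 * n ^ 3 - qlen M := by omega
        omega )
  }

lemma main_closure {n : ℕ} : ∀ (k : ℕ) (M : PM n), meas M < k →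
    DeltaM M ∈ AddSubmonoid.closure {p : PolyR n | ∃ N : PM n, Noncrossing N ∧ DeltaM N = p} := by
  intro k
  induction k with
  | zero => intro M hM; exact absurd hM (Nat.not_lt_zero _)
  | succ k ih =>
    intro M hM
    by_cases h : Noncrossing M
    · exact AddSubmonoid.subset_closure ⟨M, h, rfl⟩
    · rw [Noncrossing, not_not] at h
      obtain ⟨a, b, c, d, hab, hbc, hcd, hfa, hfb⟩ := h
      obtain ⟨N1, N2, heq, h1, h2⟩ := key M a b c d hab hbc hcd hfa hfb
      rw [heq]
      exact add_mem (ih N1 (by omega)) (ih N2 (by omega))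

theorem deltaM_nonneg_int_comb_of_noncrossing (n : ℕ) (M : PM n) :
    DeltaM M ∈ Submodule.span ℂ {p : PolyR n | ∃ N : PM n, Noncrossing N ∧ DeltaM N = p} ∧
    DeltaM M ∈ AddSubmonoid.closure {p : PolyR n | ∃ N : PM n, Noncrossing N ∧ DeltaM N = p} := by
  have h2 := main_closure (meas M + 1) M (Nat.lt_succ_self _)
  have hle : AddSubmonoid.closure {p : PolyR n | ∃ N : PM n, Noncrossing N ∧ DeltaM N = p} ≤
      (Submodule.span ℂ {p : PolyR n | ∃ N : PM n, Noncrossing N ∧ DeltaM N = p}).toAddSubmonoid :=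
    AddSubmonoid.closure_le.mpr Submodule.subset_span
  exact ⟨hle h2, h2⟩
end
end

section
/- The ℂ-span of {Δ_M : M a perfect matching on {1,...,2n}} equals the ℂ-span of {Δ_M : M a noncrossing perfect matching on {1,...,2n}}, as subspaces of the polynomial ring ℂ[x]. -/
open MvPolynomial Finset

noncomputable section

lemma gkey1 (n A B C D : ℕ) (hab : A < B) (hbc : B < C) (hcd : C < D) (hD : D < 2*n) :
    (B-A) * (8*n - (B-A)) + (D-C) * (8*n - (D-C)) <
      (C-A) * (8*n - (C-A)) + (D-B) * (8*n - (D-B)) := by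
  zify [show A ≤ B from hab.le, show C ≤ D from hcd.le, show A ≤ C by omega,
    show B ≤ D by omega, show B - A ≤ 8*n by omega, show D - C ≤ 8*n by omega,
    show C - A ≤ 8*n by omega, show D - B ≤ 8*n by omega]
  have h1 : (0:ℤ) < (C:ℤ) - B := by omega
  have h2 : (0:ℤ) < 8*(n:ℤ) - ((D:ℤ) - A) := by omega
  nlinarith [mul_pos h1 h2]

lemma gkey2 (n A B C D : ℕ) (hab : A < B) (hbc : B < C) (hcd : C < D) (hD : D < 2*n) :
    (D-A) * (8*n - (D-A)) + (C-B) * (8*n - (C-B)) <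
      (C-A) * (8*n - (C-A)) + (D-B) * (8*n - (D-B)) := by
  zify [show A ≤ D by omega, show B ≤ C from hbc.le, show A ≤ C by omega,
    show B ≤ D by omega, show D - A ≤ 8*n by omega, show C - B ≤ 8*n by omega,
    show C - A ≤ 8*n by omega, show D - B ≤ 8*n by omega]
  have h1 : (0:ℤ) < (B:ℤ) - A := by omega
  have h2 : (0:ℤ) < (D:ℤ) - C := by omega
  nlinarith [mul_pos h1 h2]

lemma pluecker {n : ℕ} (a b c d : Fin (2*n)) :
    Delta a c * Delta b d = Delta a b * Delta c d + Delta a d * Delta b c := by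
  simp only [Delta]; ring

lemma PM.f_inj {n : ℕ} (M : PM n) : Function.Injective M.f :=
  Function.LeftInverse.injective M.invol

def swapPartners {n : ℕ} (M : PM n) (p q : Fin (2*n)) (hpq : p ≠ q) (hfpq : M.f p ≠ q) :
    PM n where
  f i := if i = p then q else if i = q then p else
         if i = M.f p then M.f q else if i = M.f q then M.f p else M.f i
  invol i := by
    have h1 : M.f p ≠ p := M.nofix p
    have h2 : M.f q ≠ q := M.nofix q
    have h3 : M.f q ≠ p := fun h => hfpq (by rw [← h, M.invol])
    have h4 : M.f p ≠ M.f q := fun h => hpq (M.f_inj h)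
    by_cases e1 : i = p
    · subst e1
      simp [hpq, hpq.symm, Ne.symm h2, Ne.symm h3]
    by_cases e2 : i = q
    · subst e2
      simp [hpq, hpq.symm, Ne.symm h1, Ne.symm hfpq]
    by_cases e3 : i = M.f p
    · subst e3
      simp [h1, hfpq, h4, h4.symm, h2, h3, M.invol]
    by_cases e4 : i = M.f q
    · subst e4
      simp [h1, h2, h3, hfpq, h4, h4.symm, M.invol]
    · have g1 : M.f i ≠ p := fun h => e3 (by rw [← h, M.invol])
      have g2 : M.f i ≠ q := fun h => e4 (by rw [← h, M.invol])
      have g3 : M.f i ≠ M.f p := fun h => e1 (M.f_inj h)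
      have g4 : M.f i ≠ M.f q := fun h => e2 (M.f_inj h)
      simp [e1, e2, e3, e4, g1, g2, g3, g4, M.invol]
  nofix i := by
    have h1 : M.f p ≠ p := M.nofix p
    have h2 : M.f q ≠ q := M.nofix q
    have h3 : M.f q ≠ p := fun h => hfpq (by rw [← h, M.invol])
    have h4 : M.f p ≠ M.f q := fun h => hpq (M.f_inj h)
    by_cases e1 : i = p
    · subst e1; simp [hpq.symm]
    by_cases e2 : i = q
    · subst e2; simp [hpq, hpq.symm]
    by_cases e3 : i = M.f p
    · subst e3; simp [h1, hfpq, h3.symm, h4, h4.symm]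
    by_cases e4 : i = M.f q
    · subst e4; simp [h1, h2, h3, hfpq, Ne.symm hfpq, h4, h4.symm]
    · simp [e1, e2, e3, e4, M.nofix i]

section vals
variable {n : ℕ} (M : PM n) (p q : Fin (2*n)) (hpq : p ≠ q) (hfpq : M.f p ≠ q)

lemma swap_f_p : (swapPartners M p q hpq hfpq).f p = q := by simp [swapPartners]

lemma swap_f_q : (swapPartners M p q hpq hfpq).f q = p := by
  simp [swapPartners, hpq.symm]

lemma swap_f_fp : (swapPartners M p q hpq hfpq).f (M.f p) = M.f q := by
  simp [swapPartners, M.nofix p, hfpq]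

lemma swap_f_fq : (swapPartners M p q hpq hfpq).f (M.f q) = M.f p := by
  have h3 : M.f q ≠ p := fun h => hfpq (by rw [← h, M.invol])
  have h4 : M.f q ≠ M.f p := fun h => hpq.symm (M.f_inj h)
  simp [swapPartners, h3, M.nofix q, h4]

lemma swap_f_other (i : Fin (2*n)) (e1 : i ≠ p) (e2 : i ≠ q) (e3 : i ≠ M.f p)
    (e4 : i ≠ M.f q) : (swapPartners M p q hpq hfpq).f i = M.f i := by
  simp [swapPartners, e1, e2, e3, e4]
end vals

def mu {n : ℕ} (M : PM n) : ℕ :=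
  ∑ i ∈ Finset.univ.filter (fun i => i < M.f i),
    ((M.f i).val - i.val) * (8*n - ((M.f i).val - i.val))

lemma deltaM_mem_span (n : ℕ) :
    ∀ (k : ℕ) (M : PM n), mu M = k →
    DeltaM M ∈ Submodule.span ℂ {p : PolyR n | ∃ M : PM n, Noncrossing M ∧ DeltaM M = p} := by
  intro k
  induction k using Nat.strong_induction_on with
  | _ k ih =>
  intro M hk
  by_cases hnc : Noncrossing M
  · exact Submodule.subset_span ⟨M, hnc, rfl⟩
  rw [Noncrossing, not_not] at hnc
  obtain ⟨a, b, c, d, hab, hbc, hcd, hac, hbd⟩ := hnc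
  -- basic facts
  have hca : M.f c = a := by rw [← hac]; exact M.invol a
  have hdb : M.f d = b := by rw [← hbd]; exact M.invol b
  have vab : a.val < b.val := hab
  have vbc : b.val < c.val := hbc
  have vcd : c.val < d.val := hcd
  have hfab : M.f a ≠ b := by rw [hac]; exact hbc.ne'
  have hfad : M.f a ≠ d := by rw [hac]; exact hcd.ne
  have had : a ≠ d := (hab.trans (hbc.trans hcd)).ne
  -- the two resolutions
  set M1 : PM n := swapPartners M a b hab.ne hfab with hM1def
  set M2 : PM n := swapPartners M a d had hfad with hM2def
  have hM1a : M1.f a = b := swap_f_p M a b hab.ne hfab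
  have hM1b : M1.f b = a := swap_f_q M a b hab.ne hfab
  have hM1c : M1.f c = d := by
    have := swap_f_fp M a b hab.ne hfab; rwa [hac, hbd] at this
  have hM1d : M1.f d = c := by
    have := swap_f_fq M a b hab.ne hfab; rwa [hac, hbd] at this
  have hM1o : ∀ i : Fin (2*n), i ≠ a → i ≠ b → i ≠ c → i ≠ d → M1.f i = M.f i := by
    intro i e1 e2 e3 e4
    exact swap_f_other M a b hab.ne hfab i e1 e2 (by rw [hac]; exact e3) (by rw [hbd]; exact e4)
  have hM2a : M2.f a = d := swap_f_p M a d had hfad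
  have hM2d : M2.f d = a := swap_f_q M a d had hfad
  have hM2c : M2.f c = b := by
    have := swap_f_fp M a d had hfad; rwa [hac, hdb] at this
  have hM2b : M2.f b = c := by
    have := swap_f_fq M a d had hfad; rwa [hac, hdb] at this
  have hM2o : ∀ i : Fin (2*n), i ≠ a → i ≠ b → i ≠ c → i ≠ d → M2.f i = M.f i := by
    intro i e1 e2 e3 e4
    exact swap_f_other M a d had hfad i e1 e4 (by rw [hac]; exact e3) (by rw [hdb]; exact e2)
  -- the common part of the matchings
  set S0 : Finset (Fin (2*n)) :=
    Finset.univ.filter (fun i => i < M.f i ∧ i ≠ a ∧ i ≠ b ∧ i ≠ c ∧ i ≠ d) with hS0def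
  have memS0 : ∀ i : Fin (2*n), i ∈ S0 ↔ i < M.f i ∧ i ≠ a ∧ i ≠ b ∧ i ≠ c ∧ i ≠ d := by
    intro i; simp [hS0def]
  have hS : Finset.univ.filter (fun i => i < M.f i) = insert a (insert b S0) := by
    ext i
    simp only [Finset.mem_filter, Finset.mem_univ, true_and, Finset.mem_insert, memS0]
    by_cases e1 : i = a
    · subst e1; simp [hac, hab.trans hbc]
    by_cases e2 : i = b
    · subst e2; simp [hbd, hbc.trans hcd]
    by_cases e3 : i = c
    · subst e3; simp [hca, asymm (hab.trans hbc), e1, e2]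
    by_cases e4 : i = d
    · subst e4; simp [hdb, asymm (hbc.trans hcd), e1, e2]
    · simp [e1, e2, e3, e4]
  have hS1 : Finset.univ.filter (fun i => i < M1.f i) = insert a (insert c S0) := by
    ext i
    simp only [Finset.mem_filter, Finset.mem_univ, true_and, Finset.mem_insert, memS0]
    by_cases e1 : i = a
    · subst e1; simp [hM1a, hab]
    by_cases e2 : i = b
    · subst e2; simp [hM1b, asymm hab, hab.ne', hbc.ne, e1]
    by_cases e3 : i = c
    · subst e3; simp [hM1c, hcd]
    by_cases e4 : i = d
    · subst e4; simp [hM1d, asymm hcd, e1, e3]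
    · simp [hM1o i e1 e2 e3 e4, e1, e2, e3, e4]
  have hS2 : Finset.univ.filter (fun i => i < M2.f i) = insert a (insert b S0) := by
    ext i
    simp only [Finset.mem_filter, Finset.mem_univ, true_and, Finset.mem_insert, memS0]
    by_cases e1 : i = a
    · subst e1; simp [hM2a, hab.trans (hbc.trans hcd)]
    by_cases e2 : i = b
    · subst e2; simp [hM2b, hbc]
    by_cases e3 : i = c
    · subst e3; simp [hM2c, asymm hbc, e1, e2]
    by_cases e4 : i = d
    · subst e4; simp [hM2d, asymm (hab.trans (hbc.trans hcd)), e1, e2]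
    · simp [hM2o i e1 e2 e3 e4, e1, e2, e3, e4]
  -- non-membership facts
  have haS0 : a ∉ S0 := by simp [memS0]
  have hbS0 : b ∉ S0 := by simp [memS0]
  have hcS0 : c ∉ S0 := by simp [memS0]
  have hanb : a ∉ insert b S0 := by simp [haS0, hab.ne]
  have hanc : a ∉ insert c S0 := by simp [haS0, (hab.trans hbc).ne]
  -- product decompositions
  have hsame1 : ∏ i ∈ S0, Delta i (M1.f i) = ∏ i ∈ S0, Delta i (M.f i) := by
    refine Finset.prod_congr rfl fun i hi => ?_
    obtain ⟨-, e1, e2, e3, e4⟩ := (memS0 i).mp hi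
    rw [hM1o i e1 e2 e3 e4]
  have hsame2 : ∏ i ∈ S0, Delta i (M2.f i) = ∏ i ∈ S0, Delta i (M.f i) := by
    refine Finset.prod_congr rfl fun i hi => ?_
    obtain ⟨-, e1, e2, e3, e4⟩ := (memS0 i).mp hi
    rw [hM2o i e1 e2 e3 e4]
  have hP : DeltaM M = Delta a c * (Delta b d * ∏ i ∈ S0, Delta i (M.f i)) := by
    rw [DeltaM, hS, Finset.prod_insert hanb, Finset.prod_insert hbS0, hac, hbd]
  have hP1 : DeltaM M1 = Delta a b * (Delta c d * ∏ i ∈ S0, Delta i (M.f i)) := by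
    rw [DeltaM, hS1, Finset.prod_insert hanc, Finset.prod_insert hcS0, hM1a, hM1c, hsame1]
  have hP2 : DeltaM M2 = Delta a d * (Delta b c * ∏ i ∈ S0, Delta i (M.f i)) := by
    rw [DeltaM, hS2, Finset.prod_insert hanb, Finset.prod_insert hbS0, hM2a, hM2b, hsame2]
  have hsplit : DeltaM M = DeltaM M1 + DeltaM M2 := by
    rw [hP, hP1, hP2, ← mul_assoc, ← mul_assoc, ← mul_assoc, pluecker a b c d, add_mul]
  -- measure decompositions
  have hmusame1 : (∑ i ∈ S0, ((M1.f i).val - i.val) * (8*n - ((M1.f i).val - i.val)))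
      = ∑ i ∈ S0, ((M.f i).val - i.val) * (8*n - ((M.f i).val - i.val)) := by
    refine Finset.sum_congr rfl fun i hi => ?_
    obtain ⟨-, e1, e2, e3, e4⟩ := (memS0 i).mp hi
    rw [hM1o i e1 e2 e3 e4]
  have hmusame2 : (∑ i ∈ S0, ((M2.f i).val - i.val) * (8*n - ((M2.f i).val - i.val)))
      = ∑ i ∈ S0, ((M.f i).val - i.val) * (8*n - ((M.f i).val - i.val)) := by
    refine Finset.sum_congr rfl fun i hi => ?_
    obtain ⟨-, e1, e2, e3, e4⟩ := (memS0 i).mp hi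
    rw [hM2o i e1 e2 e3 e4]
  have hmuM : mu M = (c.val - a.val) * (8*n - (c.val - a.val)) +
      ((d.val - b.val) * (8*n - (d.val - b.val)) +
        ∑ i ∈ S0, ((M.f i).val - i.val) * (8*n - ((M.f i).val - i.val))) := by
    rw [mu, hS, Finset.sum_insert hanb, Finset.sum_insert hbS0, hac, hbd]
  have hmuM1 : mu M1 = (b.val - a.val) * (8*n - (b.val - a.val)) +
      ((d.val - c.val) * (8*n - (d.val - c.val)) +
        ∑ i ∈ S0, ((M.f i).val - i.val) * (8*n - ((M.f i).val - i.val))) := by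
    rw [mu, hS1, Finset.sum_insert hanc, Finset.sum_insert hcS0, hM1a, hM1c, hmusame1]
  have hmuM2 : mu M2 = (d.val - a.val) * (8*n - (d.val - a.val)) +
      ((c.val - b.val) * (8*n - (c.val - b.val)) +
        ∑ i ∈ S0, ((M.f i).val - i.val) * (8*n - ((M.f i).val - i.val))) := by
    rw [mu, hS2, Finset.sum_insert hanb, Finset.sum_insert hbS0, hM2a, hM2b, hmusame2]
  have hlt1 : mu M1 < k := by
    rw [← hk, hmuM1, hmuM]
    rw [← add_assoc, ← add_assoc]
    exact Nat.add_lt_add_right (gkey1 n a.val b.val c.val d.val vab vbc vcd d.isLt) _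
  have hlt2 : mu M2 < k := by
    rw [← hk, hmuM2, hmuM]
    rw [← add_assoc, ← add_assoc]
    exact Nat.add_lt_add_right (gkey2 n a.val b.val c.val d.val vab vbc vcd d.isLt) _
  rw [hsplit]
  exact Submodule.add_mem _ (ih (mu M1) hlt1 M1 rfl) (ih (mu M2) hlt2 M2 rfl)

theorem span_all_matchings_eq_span_noncrossing (n : ℕ) :
    Submodule.span ℂ {p : PolyR n | ∃ M : PM n, DeltaM M = p} =
      Submodule.span ℂ {p : PolyR n | ∃ M : PM n, Noncrossing M ∧ DeltaM M = p} := by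
  apply le_antisymm
  · rw [Submodule.span_le]
    rintro p ⟨M, rfl⟩
    exact deltaM_mem_span n (mu M) M rfl
  · exact Submodule.span_mono (fun p hp => by
      obtain ⟨M, _, hM⟩ := hp; exact ⟨M, hM⟩)
end
end

section
/- Let M be a noncrossing perfect matching on {1,...,2n} and let s_i = (i, i+1) act on ℂ[x] by swapping columns i and i+1. If {i, i+1} is a block of M then s_i.Δ_M = -Δ_M; otherwise, if a ∼ i and b ∼ i+1 in M, then s_i.Δ_M = Δ_M + Δ_{M'}, where M' is obtained from M by replacing the blocks {a,i} and {b,i+1} by {a,b} and {i,i+1}, and M' is again noncrossing. -/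
open MvPolynomial Finset

noncomputable section

lemma rename_Delta {n : ℕ} (i j a b : Fin (2*n)) :
    MvPolynomial.rename (fun p : Fin 2 × Fin (2*n) => (p.1, Equiv.swap i j p.2)) (Delta a b)
      = Delta (Equiv.swap i j a) (Equiv.swap i j b) := by
  simp [Delta]

lemma Delta_anti {n : ℕ} (a b : Fin (2*n)) : Delta b a = - Delta a b := by
  simp only [Delta]; ring

theorem adjacent_transposition_action (n : ℕ) (M : PM n) (hM : Noncrossing M)
    (i j : Fin (2 * n)) (hij : (j : ℕ) = (i : ℕ) + 1) :
    (M.f i = j →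
      MvPolynomial.rename (fun p : Fin 2 × Fin (2 * n) => (p.1, Equiv.swap i j p.2)) (DeltaM M) =
        - DeltaM M) ∧
    (M.f i ≠ j →
      ∃ M' : PM n, Noncrossing M' ∧ M'.f i = j ∧ M'.f (M.f i) = M.f j ∧
        (∀ k, k ≠ i → k ≠ j → k ≠ M.f i → k ≠ M.f j → M'.f k = M.f k) ∧
        MvPolynomial.rename (fun p : Fin 2 × Fin (2 * n) => (p.1, Equiv.swap i j p.2)) (DeltaM M) =
          DeltaM M + DeltaM M') := by
  constructor
  · intro hfi
    set φ : Fin 2 × Fin (2*n) → Fin 2 × Fin (2*n) := fun p => (p.1, Equiv.swap i j p.2) with hφ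
    have hji : M.f j = i := by rw [← hfi, M.invol]
    have hiltj : i < j := by rw [Fin.lt_def]; omega
    have hiS : i ∈ Finset.univ.filter (fun k => k < M.f k) := by
      simp [hfi, hiltj]
    have hfix : ∀ k ∈ (Finset.univ.filter (fun k => k < M.f k)).erase i,
        (MvPolynomial.rename φ) (Delta k (M.f k)) = Delta k (M.f k) := by
      intro k hk
      rcases Finset.mem_erase.1 hk with ⟨hki, hk'⟩
      have hklt : k < M.f k := (Finset.mem_filter.1 hk').2
      have hkj : k ≠ j := by
        rintro rfl; rw [hji] at hklt; exact absurd hiltj (not_lt.2 hklt.le)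
      have hfki : M.f k ≠ i := by
        intro h; apply hkj; rw [← hfi, ← h, M.invol]
      have hfkj : M.f k ≠ j := by
        intro h; apply hki; rw [← hji, ← h, M.invol]
      rw [rename_Delta, Equiv.swap_apply_of_ne_of_ne hki hkj,
        Equiv.swap_apply_of_ne_of_ne hfki hfkj]
    calc (MvPolynomial.rename φ) (DeltaM M)
        = (MvPolynomial.rename φ) (Delta i (M.f i)) *
          ∏ k ∈ (Finset.univ.filter (fun k => k < M.f k)).erase i,
            (MvPolynomial.rename φ) (Delta k (M.f k)) := by
          rw [DeltaM, ← Finset.mul_prod_erase _ _ hiS, map_mul, map_prod]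
      _ = (- Delta i j) *
          ∏ k ∈ (Finset.univ.filter (fun k => k < M.f k)).erase i, Delta k (M.f k) := by
          rw [Finset.prod_congr rfl hfix, hfi, rename_Delta, Equiv.swap_apply_left,
            Equiv.swap_apply_right, Delta_anti]
      _ = - DeltaM M := by
          rw [DeltaM, ← Finset.mul_prod_erase _ _ hiS, hfi, neg_mul]
  · intro hfi
    classical
    have hnij : i ≠ j := by intro h; exact absurd (congrArg Fin.val h) (by omega)
    set a := M.f i with ha
    set b := M.f j with hb
    have hfa : M.f a = i := by rw [ha]; exact M.invol i
    have hfb : M.f b = j := by rw [hb]; exact M.invol j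
    have hai : a ≠ i := by rw [ha]; exact M.nofix i
    have haj : a ≠ j := hfi
    have hbj : b ≠ j := by rw [hb]; exact M.nofix j
    have hbi : b ≠ i := by intro h; apply hfi; rw [← hfb, h]
    have hab : a ≠ b := by
      intro h; apply hnij; rw [← hfa, ← hfb, h]
    -- val versions of distinctness
    have vai : (a:ℕ) ≠ i := fun h => hai (Fin.val_injective h)
    have vaj : (a:ℕ) ≠ j := fun h => haj (Fin.val_injective h)
    have vbi : (b:ℕ) ≠ i := fun h => hbi (Fin.val_injective h)
    have vbj : (b:ℕ) ≠ j := fun h => hbj (Fin.val_injective h)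
    have vab : (a:ℕ) ≠ b := fun h => hab (Fin.val_injective h)
    have cross : ∀ w x y z : Fin (2*n), (w:ℕ) < x → (x:ℕ) < y → (y:ℕ) < z →
        M.f w = y → M.f x = z → False := fun w x y z h1 h2 h3 hw hx =>
      hM ⟨w, x, y, z, Fin.lt_def.2 h1, Fin.lt_def.2 h2, Fin.lt_def.2 h3, hw, hx⟩
    have trich : ((b:ℕ) < a ∧ (a:ℕ) < i) ∨ ((a:ℕ) < i ∧ (j:ℕ) < b) ∨
        ((j:ℕ) < b ∧ (b:ℕ) < a) := by
      rcases (show (a:ℕ) < i ∨ (j:ℕ) < a by omega) with hA | hA <;>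
        rcases (show (b:ℕ) < i ∨ (j:ℕ) < b by omega) with hB | hB
      · refine Or.inl ⟨?_, hA⟩
        by_contra h
        exact cross a b i j (by omega) (by omega) (by omega) hfa hfb
      · exact Or.inr (Or.inl ⟨hA, hB⟩)
      · exact absurd (cross b i j a hB (by omega) hA hfb ha.symm) (fun h => h)
      · refine Or.inr (Or.inr ⟨hB, ?_⟩)
        by_contra h
        exact cross i j a b (by omega) (by omega) (by omega) ha.symm hb.symm
    set g : Fin (2*n) → Fin (2*n) :=
      fun k => if k = i then j else if k = j then i else if k = a then b
        else if k = b then a else M.f k with hg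
    have hg_i : g i = j := by simp [hg]
    have hg_j : g j = i := by simp [hg, hnij.symm]
    have hg_a : g a = b := by simp [hg, hai, haj]
    have hg_b : g b = a := by simp [hg, hbi, hbj, (Ne.symm hab)]
    have hg_other : ∀ k, k ≠ i → k ≠ j → k ≠ a → k ≠ b → g k = M.f k := by
      intro k h1 h2 h3 h4; simp [hg, h1, h2, h3, h4]
    have hfk_ne : ∀ k : Fin (2*n), k ≠ i → k ≠ j → k ≠ a → k ≠ b →
        (M.f k ≠ i ∧ M.f k ≠ j ∧ M.f k ≠ a ∧ M.f k ≠ b) := by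
      intro k h1 h2 h3 h4
      refine ⟨?_, ?_, ?_, ?_⟩ <;> intro h
      · exact h3 (by rw [← M.invol k, h, ← ha])
      · exact h4 (by rw [← M.invol k, h, ← hb])
      · exact h1 (by rw [← M.invol k, h, hfa])
      · exact h2 (by rw [← M.invol k, h, hfb])
    have hinvol : ∀ k, g (g k) = k := by
      intro k
      by_cases h1 : k = i
      · rw [h1, hg_i, hg_j]
      by_cases h2 : k = j
      · rw [h2, hg_j, hg_i]
      by_cases h3 : k = a
      · rw [h3, hg_a, hg_b]
      by_cases h4 : k = b
      · rw [h4, hg_b, hg_a]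
      obtain ⟨n1, n2, n3, n4⟩ := hfk_ne k h1 h2 h3 h4
      rw [hg_other k h1 h2 h3 h4, hg_other _ n1 n2 n3 n4, M.invol]
    have hnofix : ∀ k, g k ≠ k := by
      intro k
      by_cases h1 : k = i
      · rw [h1, hg_i]; exact hnij.symm
      by_cases h2 : k = j
      · rw [h2, hg_j]; exact hnij
      by_cases h3 : k = a
      · rw [h3, hg_a]; exact (Ne.symm hab)
      by_cases h4 : k = b
      · rw [h4, hg_b]; exact hab
      rw [hg_other k h1 h2 h3 h4]; exact M.nofix k
    set M' : PM n := ⟨g, hinvol, hnofix⟩ with hM'def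
    have hM'f : M'.f = g := rfl
    have hblock : ∀ p r : Fin (2*n), g p = r →
        ((p:ℕ) = i ∧ (r:ℕ) = j) ∨ ((p:ℕ) = j ∧ (r:ℕ) = i) ∨
        ((p:ℕ) = a ∧ (r:ℕ) = b) ∨ ((p:ℕ) = b ∧ (r:ℕ) = a) ∨
        ((p:ℕ) ≠ i ∧ (p:ℕ) ≠ j ∧ (r:ℕ) ≠ i ∧ (r:ℕ) ≠ j ∧ M.f p = r) := by
      intro p r hpr
      by_cases h1 : p = i
      · rw [h1, hg_i] at hpr
        exact Or.inl ⟨congrArg Fin.val h1, (congrArg Fin.val hpr).symm⟩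
      by_cases h2 : p = j
      · rw [h2, hg_j] at hpr
        exact Or.inr (Or.inl ⟨congrArg Fin.val h2, (congrArg Fin.val hpr).symm⟩)
      by_cases h3 : p = a
      · rw [h3, hg_a] at hpr
        exact Or.inr (Or.inr (Or.inl ⟨congrArg Fin.val h3, (congrArg Fin.val hpr).symm⟩))
      by_cases h4 : p = b
      · rw [h4, hg_b] at hpr
        exact Or.inr (Or.inr (Or.inr (Or.inl
          ⟨congrArg Fin.val h4, (congrArg Fin.val hpr).symm⟩)))
      rw [hg_other p h1 h2 h3 h4] at hpr
      obtain ⟨n1, n2, n3, n4⟩ := hfk_ne p h1 h2 h3 h4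
      rw [hpr] at n1 n2
      refine Or.inr (Or.inr (Or.inr (Or.inr
        ⟨fun h => h1 (Fin.val_injective h), fun h => h2 (Fin.val_injective h),
         fun h => n1 (Fin.val_injective h), fun h => n2 (Fin.val_injective h), hpr⟩)))
    have hM'nc : Noncrossing M' := by
      rintro ⟨p, q, r, s, hpq, hqr, hrs, hpr, hqs⟩
      rw [Fin.lt_def] at hpq hqr hrs
      rcases hblock p r hpr with ⟨h1,h2⟩|⟨h1,h2⟩|⟨h1,h2⟩|⟨h1,h2⟩|⟨h5,h6,h7,h8,hfp⟩ <;>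
        rcases hblock q s hqs with ⟨g1,g2⟩|⟨g1,g2⟩|⟨g1,g2⟩|⟨g1,g2⟩|⟨g5,g6,g7,g8,hfq⟩ <;>
        try omega
      -- (p=a,r=b) & M-block (q,s) : config 2 only
      · rcases trich with ⟨c1,c2⟩|⟨c1,c2⟩|⟨c1,c2⟩
        · omega
        · rcases (show (q:ℕ) < i ∨ (j:ℕ) < q by omega) with hq | hq
          · exact cross a q i s (by omega) hq (by omega) hfa hfq
          · exact cross j q b s hq (by omega) (by omega) hb.symm hfq
        · omega
      -- (p=b,r=a) & M-block (q,s) : configs 1,3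
      · rcases trich with ⟨c1,c2⟩|⟨c1,c2⟩|⟨c1,c2⟩
        · rcases (show (s:ℕ) < i ∨ (j:ℕ) < s by omega) with hs | hs
          · exact cross q a s i (by omega) (by omega) hs hfq hfa
          · exact cross b q j s (by omega) (by omega) hs hfb hfq
        · omega
        · exact cross i q a s (by omega) (by omega) (by omega) ha.symm hfq
      -- M-block (p,r) & (q=a,s=b) : config 2 only
      · rcases trich with ⟨c1,c2⟩|⟨c1,c2⟩|⟨c1,c2⟩
        · omega
        · rcases (show (r:ℕ) < i ∨ (j:ℕ) < r by omega) with hr | hr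
          · exact cross p a r i (by omega) (by omega) hr hfp hfa
          · exact cross p j r b (by omega) hr (by omega) hfp hb.symm
        · omega
      -- M-block (p,r) & (q=b,s=a) : configs 1,3
      · rcases trich with ⟨c1,c2⟩|⟨c1,c2⟩|⟨c1,c2⟩
        · exact cross p b r j (by omega) (by omega) (by omega) hfp hfb
        · omega
        · rcases (show (p:ℕ) < i ∨ (j:ℕ) < p by omega) with hp | hp
          · exact cross p i r a hp (by omega) (by omega) hfp ha.symm
          · exact cross j p b r hp (by omega) (by omega) hb.symm hfp
      -- both M-blocks
      · exact cross p q r s hpq hqr hrs hfp hfq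
    refine ⟨M', hM'nc, hg_i, hg_a, fun k h1 h2 h3 h4 => hg_other k h1 h2 h3 h4, ?_⟩
    set T : Finset (Fin (2*n)) := Finset.univ.filter
      (fun k => k < M.f k ∧ k ≠ i ∧ k ≠ j ∧ k ≠ a ∧ k ≠ b) with hT
    have hTmem : ∀ k, k ∈ T ↔ (k < M.f k ∧ k ≠ i ∧ k ≠ j ∧ k ≠ a ∧ k ≠ b) := by
      intro k; simp [hT]
    have hT_fix : ∀ k ∈ T, (rename (fun p : Fin 2 × Fin (2*n) => (p.1, Equiv.swap i j p.2)))
        (Delta k (M.f k)) = Delta k (M.f k) := by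
      intro k hk
      obtain ⟨-, h1, h2, h3, h4⟩ := (hTmem k).1 hk
      obtain ⟨n1, n2, -, -⟩ := hfk_ne k h1 h2 h3 h4
      rw [rename_Delta, Equiv.swap_apply_of_ne_of_ne h1 h2, Equiv.swap_apply_of_ne_of_ne n1 n2]
    have hT_g : ∀ k ∈ T, Delta k (g k) = Delta k (M.f k) := by
      intro k hk
      obtain ⟨-, h1, h2, h3, h4⟩ := (hTmem k).1 hk
      rw [hg_other k h1 h2 h3 h4]
    have prod_split : ∀ (S : Finset (Fin (2*n))) (F : Fin (2*n) → PolyR n) (p q : Fin (2*n)),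
        p ≠ q → p ∉ T → q ∉ T → S = insert p (insert q T) →
        ∏ k ∈ S, F k = F p * (F q * ∏ k ∈ T, F k) := by
      intro S F p q h1 h2 h3 h4
      rw [h4, Finset.prod_insert (by simp [Finset.mem_insert, h1, h2]), Finset.prod_insert h3]
    have hiT : i ∉ T := by simp [hTmem]
    have hjT : j ∉ T := by simp [hTmem]
    have haT : a ∉ T := by simp [hTmem]
    have hbT : b ∉ T := by simp [hTmem]
    rcases trich with ⟨c1, c2⟩ | ⟨c1, c2⟩ | ⟨c1, c2⟩
    · -- config 1 : b < a < i < j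
      have hSM : Finset.univ.filter (fun k => k < M.f k) = insert a (insert b T) := by
        ext k
        simp only [Finset.mem_filter, Finset.mem_univ, true_and, Finset.mem_insert, hTmem]
        constructor
        · intro hk
          by_cases h1 : k = a
          · exact Or.inl h1
          by_cases h2 : k = b
          · exact Or.inr (Or.inl h2)
          refine Or.inr (Or.inr ⟨hk, ?_, ?_, h1, h2⟩)
          · rintro rfl
            rw [← ha] at hk
            exact absurd (Fin.lt_def.1 hk) (by omega)
          · rintro rfl
            rw [← hb] at hk
            exact absurd (Fin.lt_def.1 hk) (by omega)
        · rintro (rfl | rfl | ⟨h, -⟩)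
          · rw [hfa]; exact Fin.lt_def.2 (by omega)
          · rw [hfb]; exact Fin.lt_def.2 (by omega)
          · exact h
      have hSM' : Finset.univ.filter (fun k => k < g k) = insert i (insert b T) := by
        ext k
        simp only [Finset.mem_filter, Finset.mem_univ, true_and, Finset.mem_insert, hTmem]
        constructor
        · intro hk
          by_cases h1 : k = i
          · exact Or.inl h1
          by_cases h4 : k = b
          · exact Or.inr (Or.inl h4)
          by_cases h2 : k = j
          · subst h2; rw [hg_j] at hk; exact absurd (Fin.lt_def.1 hk) (by omega)
          by_cases h3 : k = a
          · subst h3; rw [hg_a] at hk; exact absurd (Fin.lt_def.1 hk) (by omega)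
          refine Or.inr (Or.inr ⟨?_, h1, h2, h3, h4⟩)
          rwa [hg_other k h1 h2 h3 h4] at hk
        · rintro (rfl | rfl | ⟨h, h1, h2, h3, h4⟩)
          · rw [hg_i]; exact Fin.lt_def.2 (by omega)
          · rw [hg_b]; exact Fin.lt_def.2 (by omega)
          · rwa [hg_other k h1 h2 h3 h4]
      have e1 : DeltaM M = Delta a i * (Delta b j * ∏ k ∈ T, Delta k (M.f k)) := by
        rw [DeltaM, prod_split _ _ a b hab haT hbT hSM, hfa, hfb]
      have e2 : DeltaM M' = Delta i j * (Delta b a * ∏ k ∈ T, Delta k (M.f k)) := by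
        rw [DeltaM, hM'f, prod_split _ _ i b (Ne.symm hbi) hiT hbT hSM', hg_i, hg_b,
          Finset.prod_congr rfl hT_g]
      have e3 : (rename (fun p : Fin 2 × Fin (2*n) => (p.1, Equiv.swap i j p.2))) (DeltaM M)
          = Delta a j * (Delta b i * ∏ k ∈ T, Delta k (M.f k)) := by
        rw [e1, map_mul, map_mul, map_prod, rename_Delta, rename_Delta,
          Finset.prod_congr rfl hT_fix, Equiv.swap_apply_of_ne_of_ne hai haj,
          Equiv.swap_apply_of_ne_of_ne hbi hbj, Equiv.swap_apply_left, Equiv.swap_apply_right]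
      rw [e3, e1, e2]
      simp only [Delta]; ring
    · -- config 2 : a < i < j < b
      have hSM : Finset.univ.filter (fun k => k < M.f k) = insert a (insert j T) := by
        ext k
        simp only [Finset.mem_filter, Finset.mem_univ, true_and, Finset.mem_insert, hTmem]
        constructor
        · intro hk
          by_cases h1 : k = a
          · exact Or.inl h1
          by_cases h2 : k = j
          · exact Or.inr (Or.inl h2)
          refine Or.inr (Or.inr ⟨hk, ?_, h2, h1, ?_⟩)
          · rintro rfl
            rw [← ha] at hk
            exact absurd (Fin.lt_def.1 hk) (by omega)
          · rintro rfl
            rw [hfb] at hk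
            exact absurd (Fin.lt_def.1 hk) (by omega)
        · rintro (rfl | rfl | ⟨h, -⟩)
          · rw [hfa]; exact Fin.lt_def.2 (by omega)
          · rw [← hb]; exact Fin.lt_def.2 (by omega)
          · exact h
      have hSM' : Finset.univ.filter (fun k => k < g k) = insert i (insert a T) := by
        ext k
        simp only [Finset.mem_filter, Finset.mem_univ, true_and, Finset.mem_insert, hTmem]
        constructor
        · intro hk
          by_cases h1 : k = i
          · exact Or.inl h1
          by_cases h3 : k = a
          · exact Or.inr (Or.inl h3)
          by_cases h2 : k = j
          · subst h2; rw [hg_j] at hk; exact absurd (Fin.lt_def.1 hk) (by omega)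
          by_cases h4 : k = b
          · subst h4; rw [hg_b] at hk; exact absurd (Fin.lt_def.1 hk) (by omega)
          refine Or.inr (Or.inr ⟨?_, h1, h2, h3, h4⟩)
          rwa [hg_other k h1 h2 h3 h4] at hk
        · rintro (rfl | rfl | ⟨h, h1, h2, h3, h4⟩)
          · rw [hg_i]; exact Fin.lt_def.2 (by omega)
          · rw [hg_a]; exact Fin.lt_def.2 (by omega)
          · rwa [hg_other k h1 h2 h3 h4]
      have e1 : DeltaM M = Delta a i * (Delta j b * ∏ k ∈ T, Delta k (M.f k)) := by
        rw [DeltaM, prod_split _ _ a j haj haT hjT hSM, hfa, ← hb]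
      have e2 : DeltaM M' = Delta i j * (Delta a b * ∏ k ∈ T, Delta k (M.f k)) := by
        rw [DeltaM, hM'f, prod_split _ _ i a (Ne.symm hai) hiT haT hSM', hg_i, hg_a,
          Finset.prod_congr rfl hT_g]
      have e3 : (rename (fun p : Fin 2 × Fin (2*n) => (p.1, Equiv.swap i j p.2))) (DeltaM M)
          = Delta a j * (Delta i b * ∏ k ∈ T, Delta k (M.f k)) := by
        rw [e1, map_mul, map_mul, map_prod, rename_Delta, rename_Delta,
          Finset.prod_congr rfl hT_fix, Equiv.swap_apply_of_ne_of_ne hai haj,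
          Equiv.swap_apply_of_ne_of_ne hbi hbj, Equiv.swap_apply_left, Equiv.swap_apply_right]
      rw [e3, e1, e2]
      simp only [Delta]; ring
    · -- config 3 : i < j < b < a
      have hSM : Finset.univ.filter (fun k => k < M.f k) = insert i (insert j T) := by
        ext k
        simp only [Finset.mem_filter, Finset.mem_univ, true_and, Finset.mem_insert, hTmem]
        constructor
        · intro hk
          by_cases h1 : k = i
          · exact Or.inl h1
          by_cases h2 : k = j
          · exact Or.inr (Or.inl h2)
          refine Or.inr (Or.inr ⟨hk, h1, h2, ?_, ?_⟩)
          · rintro rfl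
            rw [hfa] at hk
            exact absurd (Fin.lt_def.1 hk) (by omega)
          · rintro rfl
            rw [hfb] at hk
            exact absurd (Fin.lt_def.1 hk) (by omega)
        · rintro (rfl | rfl | ⟨h, -⟩)
          · rw [← ha]; exact Fin.lt_def.2 (by omega)
          · rw [← hb]; exact Fin.lt_def.2 (by omega)
          · exact h
      have hSM' : Finset.univ.filter (fun k => k < g k) = insert i (insert b T) := by
        ext k
        simp only [Finset.mem_filter, Finset.mem_univ, true_and, Finset.mem_insert, hTmem]
        constructor
        · intro hk
          by_cases h1 : k = i
          · exact Or.inl h1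
          by_cases h4 : k = b
          · exact Or.inr (Or.inl h4)
          by_cases h2 : k = j
          · subst h2; rw [hg_j] at hk; exact absurd (Fin.lt_def.1 hk) (by omega)
          by_cases h3 : k = a
          · subst h3; rw [hg_a] at hk; exact absurd (Fin.lt_def.1 hk) (by omega)
          refine Or.inr (Or.inr ⟨?_, h1, h2, h3, h4⟩)
          rwa [hg_other k h1 h2 h3 h4] at hk
        · rintro (rfl | rfl | ⟨h, h1, h2, h3, h4⟩)
          · rw [hg_i]; exact Fin.lt_def.2 (by omega)
          · rw [hg_b]; exact Fin.lt_def.2 (by omega)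
          · rwa [hg_other k h1 h2 h3 h4]
      have e1 : DeltaM M = Delta i a * (Delta j b * ∏ k ∈ T, Delta k (M.f k)) := by
        rw [DeltaM, prod_split _ _ i j hnij hiT hjT hSM, ← ha, ← hb]
      have e2 : DeltaM M' = Delta i j * (Delta b a * ∏ k ∈ T, Delta k (M.f k)) := by
        rw [DeltaM, hM'f, prod_split _ _ i b (Ne.symm hbi) hiT hbT hSM', hg_i, hg_b,
          Finset.prod_congr rfl hT_g]
      have e3 : (rename (fun p : Fin 2 × Fin (2*n) => (p.1, Equiv.swap i j p.2))) (DeltaM M)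
          = Delta j a * (Delta i b * ∏ k ∈ T, Delta k (M.f k)) := by
        rw [e1, map_mul, map_mul, map_prod, rename_Delta, rename_Delta,
          Finset.prod_congr rfl hT_fix, Equiv.swap_apply_of_ne_of_ne hai haj,
          Equiv.swap_apply_of_ne_of_ne hbi hbj, Equiv.swap_apply_left, Equiv.swap_apply_right]
      rw [e3, e1, e2]
      simp only [Delta]; ring
end
end

section
/- The number of standard Young tableaux of shape (n,n) equals the n-th Catalan number Cat(n) = (1/(n+1))·C(2n,n). -/
open MvPolynomial Finset

noncomputable section

namespace SYTAux

open DyckStep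

lemma count_take_ofFn {m : ℕ} (f : Fin m → DyckStep) (s : DyckStep) (i : ℕ) :
    ((List.ofFn f).take i).count s =
      (Finset.univ.filter fun j : Fin m => j.val < i ∧ f j = s).card := by
  have key : ∀ l : List DyckStep, l.count s = (l.map fun x => if x = s then (1:ℕ) else 0).sum := by
    intro l
    induction l with
    | nil => simp
    | cons a t ih => by_cases h : a = s <;> simp [List.count_cons, ih, h, add_comm]
  rw [key, List.map_take, List.map_ofFn, List.sum_take_ofFn, Finset.card_filter,
    ← Finset.sum_filter]
  simp [Function.comp, Finset.filter_filter]

variable {n : ℕ}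

/-- The step word of a tableau: position `k` is `U` iff `k` lies in row 0. -/
def stepOf (T : Fin 2 × Fin n → Fin (2 * n)) (k : Fin (2 * n)) : DyckStep :=
  if ∃ j, T (0, j) = k then U else D

lemma stepOf_eq_U {T : Fin 2 × Fin n → Fin (2 * n)} {k} :
    stepOf T k = U ↔ ∃ j, T (0, j) = k := by
  unfold stepOf; split <;> simp_all

lemma stepOf_eq_D {T : Fin 2 × Fin n → Fin (2 * n)} (hT : Function.Bijective T) {k} :
    stepOf T k = D ↔ ∃ j, T (1, j) = k := by
  unfold stepOf
  by_cases h : ∃ j, T (0, j) = k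
  · rw [if_pos h]
    simp only [reduceCtorEq, false_iff]
    rintro ⟨j, rfl⟩
    obtain ⟨j', hj'⟩ := h
    have := hT.1 hj'
    simp [Prod.ext_iff] at this
  · rw [if_neg h]
    simp only [true_iff]
    obtain ⟨⟨i, j⟩, hij⟩ := hT.2 k
    have : i = 0 ∨ i = 1 := by omega
    rcases this with rfl | rfl
    · exact absurd ⟨j, hij⟩ h
    · exact ⟨j, hij⟩

lemma count_U_take (T : Fin 2 × Fin n → Fin (2 * n)) (hinj : Function.Injective T) (i : ℕ) :
    ((List.ofFn (stepOf T)).take i).count U =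
      (Finset.univ.filter fun j : Fin n => (T (0, j) : ℕ) < i).card := by
  rw [count_take_ofFn]
  refine (Finset.card_bij (fun j _ => T (0, j)) ?_ ?_ ?_).symm
  · intro j hj
    simp only [mem_filter, mem_univ, true_and] at hj ⊢
    exact ⟨hj, stepOf_eq_U.mpr ⟨j, rfl⟩⟩
  · intro a _ b _ h
    have := hinj h
    simpa [Prod.ext_iff] using this
  · intro k hk
    simp only [mem_filter, mem_univ, true_and, stepOf_eq_U] at hk
    obtain ⟨hki, j, hj⟩ := hk
    exact ⟨j, by simp [mem_filter, hj, hki], hj⟩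

lemma count_D_take (T : Fin 2 × Fin n → Fin (2 * n)) (hT : Function.Bijective T) (i : ℕ) :
    ((List.ofFn (stepOf T)).take i).count D =
      (Finset.univ.filter fun j : Fin n => (T (1, j) : ℕ) < i).card := by
  rw [count_take_ofFn]
  refine (Finset.card_bij (fun j _ => T (1, j)) ?_ ?_ ?_).symm
  · intro j hj
    simp only [mem_filter, mem_univ, true_and] at hj ⊢
    exact ⟨hj, (stepOf_eq_D hT).mpr ⟨j, rfl⟩⟩
  · intro a _ b _ h
    have := hT.1 h
    simpa [Prod.ext_iff] using this
  · intro k hk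
    simp only [mem_filter, mem_univ, true_and, stepOf_eq_D hT] at hk
    obtain ⟨hki, j, hj⟩ := hk
    exact ⟨j, by simp [mem_filter, hj, hki], hj⟩

/-- The Dyck word associated to a standard Young tableau of shape `(n,n)`. -/
def wordOf (T : Fin 2 × Fin n → Fin (2 * n))
    (hT : Function.Bijective T ∧
      (∀ (i : Fin 2) (j j' : Fin n), j < j' → T (i, j) < T (i, j')) ∧
      (∀ j : Fin n, T (0, j) < T (1, j))) : DyckWord where
  toList := List.ofFn (stepOf T)
  count_U_eq_count_D := by
    have h1 := count_U_take T hT.1.injective (2 * n)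
    have h2 := count_D_take T hT.1 (2 * n)
    rw [List.take_of_length_le (by simp)] at h1 h2
    rw [h1, h2, Finset.filter_true_of_mem (fun j _ => (T (0, j)).isLt),
      Finset.filter_true_of_mem (fun j _ => (T (1, j)).isLt)]
  count_D_le_count_U i := by
    rw [count_U_take T hT.1.injective i, count_D_take T hT.1 i]
    apply Finset.card_le_card
    intro j hj
    simp only [mem_filter, mem_univ, true_and] at hj ⊢
    exact lt_of_le_of_lt (Nat.le_of_lt (hT.2.2 j)) hj

lemma semilength_wordOf (T : Fin 2 × Fin n → Fin (2 * n)) (hT) :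
    (wordOf T hT).semilength = n := by
  show (List.ofFn (stepOf T)).count U = n
  have h1 := count_U_take T hT.1.injective (2 * n)
  rw [List.take_of_length_le (by simp)] at h1
  rw [h1, Finset.filter_true_of_mem (fun j _ => (T (0, j)).isLt)]
  simp

lemma hlen {p : DyckWord} (hp : p.semilength = n) : p.toList.length = 2 * n := by
  rw [← p.two_mul_semilength_eq_length, hp]

/-- The list of a Dyck word of semilength `n`, as a function on `Fin (2n)`. -/
def stepAt (p : DyckWord) (hl : p.toList.length = 2 * n) (k : Fin (2 * n)) : DyckStep :=
  p.toList.get (Fin.cast hl.symm k)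

lemma ofFn_stepAt {p : DyckWord} (hl : p.toList.length = 2 * n) :
    List.ofFn (stepAt p hl) = p.toList := by
  apply List.ext_get (by simp [hl])
  intro i h1 h2
  simp [stepAt]

/-- Positions of `U` steps. -/
def Aset (p : DyckWord) (hl : p.toList.length = 2 * n) : Finset (Fin (2 * n)) :=
  Finset.univ.filter fun k => stepAt p hl k = U

/-- Positions of `D` steps. -/
def Bset (p : DyckWord) (hl : p.toList.length = 2 * n) : Finset (Fin (2 * n)) :=
  Finset.univ.filter fun k => stepAt p hl k = D

lemma count_eq_cardA {p : DyckWord} (hl : p.toList.length = 2 * n) (i : ℕ) :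
    (p.toList.take i).count U = ((Aset p hl).filter fun k => k.val < i).card := by
  conv_lhs => rw [← ofFn_stepAt hl]
  rw [count_take_ofFn]
  congr 1
  ext k
  simp [Aset, and_comm]

lemma count_eq_cardB {p : DyckWord} (hl : p.toList.length = 2 * n) (i : ℕ) :
    (p.toList.take i).count D = ((Bset p hl).filter fun k => k.val < i).card := by
  conv_lhs => rw [← ofFn_stepAt hl]
  rw [count_take_ofFn]
  congr 1
  ext k
  simp [Bset, and_comm]

lemma card_Aset {p : DyckWord} (hl : p.toList.length = 2 * n) (hp : p.semilength = n) :
    (Aset p hl).card = n := by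
  have h := count_eq_cardA hl (2 * n)
  rw [List.take_of_length_le hl.le] at h
  rw [Finset.filter_true_of_mem (fun k _ => k.isLt)] at h
  rw [← h]
  exact hp

lemma card_Bset {p : DyckWord} (hl : p.toList.length = 2 * n) (hp : p.semilength = n) :
    (Bset p hl).card = n := by
  have h := count_eq_cardB hl (2 * n)
  rw [List.take_of_length_le hl.le] at h
  rw [Finset.filter_true_of_mem (fun k _ => k.isLt)] at h
  rw [← h, ← p.count_U_eq_count_D]
  exact hp

/-- The tableau associated to a Dyck word. -/
def tabOf (p : DyckWord) (hl : p.toList.length = 2 * n) (hp : p.semilength = n) :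
    Fin 2 × Fin n → Fin (2 * n) :=
  fun q => if q.1 = 0 then (Aset p hl).orderEmbOfFin (card_Aset hl hp) q.2
    else (Bset p hl).orderEmbOfFin (card_Bset hl hp) q.2

lemma tabOf_zero {p : DyckWord} (hl : p.toList.length = 2 * n) (hp : p.semilength = n)
    (j : Fin n) : tabOf p hl hp (0, j) = (Aset p hl).orderEmbOfFin (card_Aset hl hp) j := rfl

lemma tabOf_one {p : DyckWord} (hl : p.toList.length = 2 * n) (hp : p.semilength = n)
    (j : Fin n) : tabOf p hl hp (1, j) = (Bset p hl).orderEmbOfFin (card_Bset hl hp) j := rfl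

lemma tab_col {p : DyckWord} (hl : p.toList.length = 2 * n) (hp : p.semilength = n)
    (j : Fin n) : tabOf p hl hp (0, j) < tabOf p hl hp (1, j) := by
  rw [tabOf_zero, tabOf_one]
  set A := Aset p hl with hA
  set B := Bset p hl with hB
  set a := A.orderEmbOfFin (card_Aset hl hp) j with ha
  set b := B.orderEmbOfFin (card_Bset hl hp) j with hb
  have h1 : (j : ℕ) + 1 ≤ (B.filter (· ≤ b)).card := by
    rw [← Fin.card_Iic j]
    apply Finset.card_le_card_of_injOn (fun i => B.orderEmbOfFin (card_Bset hl hp) i)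
    · intro i hi
      refine Finset.mem_filter.mpr ?_
      exact ⟨Finset.orderEmbOfFin_mem _ _ _,
        (B.orderEmbOfFin (card_Bset hl hp)).monotone (Finset.mem_Iic.mp hi)⟩
    · intro x _ y _ h
      exact (B.orderEmbOfFin (card_Bset hl hp)).injective h
  have h2 : (p.toList.take ((b : ℕ) + 1)).count D = (B.filter (· ≤ b)).card := by
    rw [count_eq_cardB hl]
    congr 1
    ext k
    simp only [mem_filter, Nat.lt_succ_iff, ← Fin.le_def, hB]
  have h3 : (p.toList.take ((b : ℕ) + 1)).count U = (A.filter (· ≤ b)).card := by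
    rw [count_eq_cardA hl]
    congr 1
    ext k
    simp only [mem_filter, Nat.lt_succ_iff, ← Fin.le_def, hA]
  have h4 := p.count_D_le_count_U ((b : ℕ) + 1)
  have hbB : b ∈ B := Finset.orderEmbOfFin_mem _ _ _
  have hbA : b ∉ A := by
    simp only [hA, hB, Aset, Bset, mem_filter, mem_univ, true_and] at hbB ⊢
    simp [hbB]
  have h5 : A.filter (· ≤ b) = A.filter (· < b) := by
    ext x
    simp only [mem_filter]
    constructor
    · rintro ⟨hx, hxb⟩
      exact ⟨hx, lt_of_le_of_ne hxb (fun h => hbA (h ▸ hx))⟩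
    · rintro ⟨hx, hxb⟩
      exact ⟨hx, le_of_lt hxb⟩
  have h6 : (j : ℕ) + 1 ≤ (A.filter (· < b)).card := by
    rw [← h5]; omega
  by_contra hab
  push_neg at hab
  have h7 : A.filter (· < b) ⊆
      Finset.image (fun i : Fin n => A.orderEmbOfFin (card_Aset hl hp) i) (Finset.Iio j) := by
    intro x hx
    rw [mem_filter] at hx
    obtain ⟨hxA, hxb⟩ := hx
    have hxr : x ∈ Set.range (A.orderEmbOfFin (card_Aset hl hp)) := by
      rw [Finset.range_orderEmbOfFin]
      exact hxA
    obtain ⟨i, hi⟩ := hxr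
    have hij : i < j := by
      have : A.orderEmbOfFin (card_Aset hl hp) i < A.orderEmbOfFin (card_Aset hl hp) j := by
        rw [hi, ← ha]
        exact lt_of_lt_of_le hxb hab
      exact (A.orderEmbOfFin (card_Aset hl hp)).strictMono.lt_iff_lt.mp this
    exact Finset.mem_image.mpr ⟨i, Finset.mem_Iio.mpr hij, hi⟩
  have h8 := (Finset.card_le_card h7).trans Finset.card_image_le
  rw [Fin.card_Iio] at h8
  omega

lemma tab_mono {p : DyckWord} (hl : p.toList.length = 2 * n) (hp : p.semilength = n) :
    ∀ (i : Fin 2) (j j' : Fin n), j < j' → tabOf p hl hp (i, j) < tabOf p hl hp (i, j') := by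
  intro i j j' hjj'
  by_cases hi : i = 0
  · simp only [tabOf, hi, if_pos rfl]
    exact ((Aset p hl).orderEmbOfFin (card_Aset hl hp)).strictMono hjj'
  · simp only [tabOf, if_neg hi]
    exact ((Bset p hl).orderEmbOfFin (card_Bset hl hp)).strictMono hjj'

lemma tab_bij {p : DyckWord} (hl : p.toList.length = 2 * n) (hp : p.semilength = n) :
    Function.Bijective (tabOf p hl hp) := by
  rw [Fintype.bijective_iff_injective_and_card]
  refine ⟨?_, by simp⟩
  rintro ⟨i, j⟩ ⟨i', j'⟩ h
  have hdisj : ∀ k : Fin (2 * n), k ∈ Aset p hl → k ∈ Bset p hl → False := by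
    intro k hkA hkB
    simp only [Aset, Bset, mem_filter, mem_univ, true_and] at hkA hkB
    rw [hkA] at hkB
    exact absurd hkB (by decide)
  have hi2 : i = 0 ∨ i = 1 := by omega
  have hi2' : i' = 0 ∨ i' = 1 := by omega
  rcases hi2 with rfl | rfl <;> rcases hi2' with rfl | rfl <;>
    simp only [tabOf_zero, tabOf_one] at h
  · exact congrArg _ (((Aset p hl).orderEmbOfFin (card_Aset hl hp)).injective h)
  · exact absurd (h ▸ Finset.orderEmbOfFin_mem (Aset p hl) (card_Aset hl hp) j)
      (fun hmem => hdisj _ hmem (Finset.orderEmbOfFin_mem _ _ _))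
  · exact absurd (h ▸ Finset.orderEmbOfFin_mem (Bset p hl) (card_Bset hl hp) j)
      (fun hmem => hdisj _ (Finset.orderEmbOfFin_mem _ _ _) hmem)
  · exact congrArg _ (((Bset p hl).orderEmbOfFin (card_Bset hl hp)).injective h)

/-- The equivalence between standard Young tableaux of shape `(n,n)` and Dyck words of
semilength `n`. -/
def sytEquiv (n : ℕ) :
    {T : Fin 2 × Fin n → Fin (2 * n) //
      Function.Bijective T ∧
      (∀ (i : Fin 2) (j j' : Fin n), j < j' → T (i, j) < T (i, j')) ∧
      (∀ j : Fin n, T (0, j) < T (1, j))} ≃ {p : DyckWord // p.semilength = n} where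
  toFun T := ⟨wordOf T.1 T.2, semilength_wordOf T.1 T.2⟩
  invFun p := ⟨tabOf p.1 (hlen p.2) p.2,
    tab_bij (hlen p.2) p.2, tab_mono (hlen p.2) p.2, tab_col (hlen p.2) p.2⟩
  left_inv := by
    rintro ⟨T, hT⟩
    apply Subtype.ext
    set w := wordOf T hT with hw
    have hp : w.semilength = n := semilength_wordOf T hT
    have hl : w.toList.length = 2 * n := hlen hp
    have hstep : stepAt w hl = stepOf T := by
      funext k
      show (List.ofFn (stepOf T)).get (Fin.cast hl.symm k) = stepOf T k
      rw [List.get_ofFn]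
      congr 1
    have hAw : Aset w hl = Finset.univ.filter (fun k => ∃ j, T (0, j) = k) := by
      unfold Aset
      rw [hstep]
      ext k
      simp [stepOf_eq_U]
    have hBw : Bset w hl = Finset.univ.filter (fun k => ∃ j, T (1, j) = k) := by
      unfold Bset
      rw [hstep]
      ext k
      simp [stepOf_eq_D hT.1]
    have hrow0 : (fun j => T (0, j)) = (Aset w hl).orderEmbOfFin (card_Aset hl hp) :=
      Finset.orderEmbOfFin_unique _ (fun x => by rw [hAw]; exact Finset.mem_filter.mpr ⟨Finset.mem_univ _, x, rfl⟩)
        (fun x y hxy => hT.2.1 0 x y hxy)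
    have hrow1 : (fun j => T (1, j)) = (Bset w hl).orderEmbOfFin (card_Bset hl hp) :=
      Finset.orderEmbOfFin_unique _ (fun x => by rw [hBw]; exact Finset.mem_filter.mpr ⟨Finset.mem_univ _, x, rfl⟩)
        (fun x y hxy => hT.2.1 1 x y hxy)
    funext q
    obtain ⟨i, j⟩ := q
    have hi2 : i = 0 ∨ i = 1 := by omega
    rcases hi2 with rfl | rfl
    · show tabOf w hl hp (0, j) = T (0, j)
      rw [tabOf_zero]
      exact (congrFun hrow0 j).symm
    · show tabOf w hl hp (1, j) = T (1, j)
      rw [tabOf_one]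
      exact (congrFun hrow1 j).symm
  right_inv := by
    rintro ⟨p, hp⟩
    apply Subtype.ext
    apply DyckWord.ext
    show List.ofFn (stepOf (tabOf p (hlen hp) hp)) = p.toList
    rw [← ofFn_stepAt (hlen hp)]
    apply congrArg
    funext k
    have hl : p.toList.length = 2 * n := hlen hp
    rcases (stepAt p hl k).dichotomy with hU | hD
    · rw [hU]
      apply stepOf_eq_U.mpr
      have hkA : k ∈ Aset p hl := by simp [Aset, hU]
      have : k ∈ Set.range ((Aset p hl).orderEmbOfFin (card_Aset hl hp)) := by
        rw [Finset.range_orderEmbOfFin]; exact hkA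
      obtain ⟨i, hi⟩ := this
      exact ⟨i, by rw [tabOf_zero]; exact hi⟩
    · rw [hD]
      unfold stepOf
      rw [if_neg]
      rintro ⟨j, hj⟩
      have : tabOf p hl hp (0, j) ∈ Aset p hl := by
        rw [tabOf_zero]
        exact Finset.orderEmbOfFin_mem _ _ _
      rw [hj] at this
      simp only [Aset, mem_filter, mem_univ, true_and] at this
      rw [this] at hD
      exact absurd hD (by decide)

end SYTAux

theorem card_standard_young_tableaux_two_rows (n : ℕ) :
    Nat.card {T : Fin 2 × Fin n → Fin (2 * n) //
      Function.Bijective T ∧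
      (∀ (i : Fin 2) (j j' : Fin n), j < j' → T (i, j) < T (i, j')) ∧
      (∀ j : Fin n, T (0, j) < T (1, j))} = catalan n := by
  rw [Nat.card_congr (SYTAux.sytEquiv n), Nat.card_eq_fintype_card,
    DyckWord.card_dyckWord_semilength_eq_catalan]
end
end

section
/- The set {Δ_M : M a noncrossing perfect matching on {1,...,2n}} is linearly independent over ℂ in the polynomial ring ℂ[x]. -/
open MvPolynomial Finset

noncomputable section

namespace NCaux

variable {n : ℕ}

/-- The set of openers of M. -/
def TT (M : PM n) : Finset (Fin (2 * n)) := Finset.univ.filter (fun i => i < M.f i)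

/-- Weight: sum of opener positions. -/
def w (M : PM n) : ℕ := ∑ i ∈ TT M, i.val

lemma closer_of_not_opener (M : PM n) {i : Fin (2 * n)} (h : ¬ i < M.f i) : M.f i < i :=
  lt_of_le_of_ne (not_lt.mp h) (M.nofix i)

lemma opener_partner (M : PM n) {i : Fin (2 * n)} (h : i < M.f i) : ¬ M.f i < M.f (M.f i) := by
  rw [M.invol i]; exact not_lt.mpr h.le

/-- The evaluation point attached to M: row 0 is the indicator of openers,
row 1 the indicator of closers. -/
def pt (M : PM n) : Fin 2 × Fin (2 * n) → ℂ :=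
  fun p => if (p.1 = 0 ↔ p.2 < M.f p.2) then 1 else 0

lemma pt_zero_op (M : PM n) {i : Fin (2 * n)} (h : i < M.f i) : pt M (0, i) = 1 := by
  simp [pt, h]
lemma pt_zero_cl (M : PM n) {i : Fin (2 * n)} (h : ¬ i < M.f i) : pt M (0, i) = 0 := by
  simp [pt, h]
lemma pt_one_op (M : PM n) {i : Fin (2 * n)} (h : i < M.f i) : pt M (1, i) = 0 := by
  simp [pt, h]
lemma pt_one_cl (M : PM n) {i : Fin (2 * n)} (h : ¬ i < M.f i) : pt M (1, i) = 1 := by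
  simp [pt, h]

lemma aeval_Delta (M : PM n) (a b : Fin (2 * n)) :
    aeval (pt M) (Delta a b) =
      pt M (0, a) * pt M (1, b) - pt M (0, b) * pt M (1, a) := by
  simp [Delta]

lemma aeval_DeltaM_self (M : PM n) : aeval (pt M) (DeltaM M) = 1 := by
  rw [DeltaM, map_prod]
  apply Finset.prod_eq_one
  intro i hi
  rw [Finset.mem_filter] at hi
  have h : i < M.f i := hi.2
  rw [aeval_Delta, pt_zero_op M h, pt_one_cl M (opener_partner M h),
    pt_zero_cl M (opener_partner M h), pt_one_op M h]
  ring

lemma card_TT (M : PM n) : (TT M).card = n := by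
  have hb : (TT M).card = (Finset.univ.filter (fun i => ¬ i < M.f i)).card := by
    apply Finset.card_bij (fun i _ => M.f i)
    · intro a ha
      rw [TT, Finset.mem_filter] at ha
      simp only [Finset.mem_filter, Finset.mem_univ, true_and]
      exact opener_partner M ha.2
    · intro a₁ h₁ a₂ h₂ h
      have := congrArg M.f h
      rwa [M.invol, M.invol] at this
    · intro b hb
      rw [Finset.mem_filter] at hb
      have hcl : M.f b < b := closer_of_not_opener M hb.2
      refine ⟨M.f b, ?_, M.invol b⟩
      rw [TT, Finset.mem_filter]
      exact ⟨Finset.mem_univ _, by rw [M.invol]; exact hcl⟩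
  have hc := Finset.card_filter_add_card_filter_not
    (s := (Finset.univ : Finset (Fin (2 * n)))) (p := fun i => i < M.f i)
  rw [Finset.card_univ, Fintype.card_fin] at hc
  rw [TT] at hb ⊢
  omega

/-- The key interchange step for the uniqueness of noncrossing matchings with a
given opener set. -/
lemma C_aux (M M' : PM n) (hM : Noncrossing M)
    (hT : ∀ i, i < M.f i ↔ i < M'.f i)
    (c : Fin (2 * n)) (hcl : M.f c < c) (hmm : M.f c ≠ M'.f c)
    (hmin : ∀ d, M.f d < d → M.f d ≠ M'.f d → c ≤ d)
    (hlt : M.f c < M'.f c) : False := by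
  have hcnop' : ¬ c < M'.f c := fun h => (not_lt.mpr hcl.le) ((hT c).mpr h)
  have ho'c : M'.f c < c := lt_of_le_of_ne (not_lt.mp hcnop') (M'.nofix c)
  have ho'op' : M'.f c < M'.f (M'.f c) := by rw [M'.invol]; exact ho'c
  have ho'op : M'.f c < M.f (M'.f c) := (hT _).mpr ho'op'
  have hdc : M.f (M'.f c) ≠ c := by
    intro h
    have h2 := congrArg M.f h
    rw [M.invol] at h2
    exact hmm h2.symm
  have hdltc : M.f (M'.f c) < c := by
    rcases lt_or_ge (M.f (M'.f c)) c with h | h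
    · exact h
    · exact absurd ⟨M.f c, M'.f c, c, M.f (M'.f c), hlt, ho'c,
        lt_of_le_of_ne h (Ne.symm hdc), M.invol c, rfl⟩ hM
  have hdcl : M.f (M.f (M'.f c)) < M.f (M'.f c) := by rw [M.invol]; exact ho'op
  have hdmm : M.f (M.f (M'.f c)) ≠ M'.f (M.f (M'.f c)) := by
    rw [M.invol]
    intro h
    have h2 := congrArg M'.f h
    rw [M'.invol, M'.invol] at h2
    exact hdc h2.symm
  exact absurd (hmin _ hdcl hdmm) (not_le.mpr hdltc)

lemma PM_ext {M M' : PM n} (h : M.f = M'.f) : M = M' := by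
  cases M; cases M'; simpa using h

/-- Noncrossing matchings with the same opener set coincide. -/
lemma eq_of_same_openers (M M' : PM n) (hM : Noncrossing M) (hM' : Noncrossing M')
    (hT : ∀ i, i < M.f i ↔ i < M'.f i) : M = M' := by
  by_contra hne
  -- there is a mismatched closer
  have hexists : ∃ c, M.f c < c ∧ M.f c ≠ M'.f c := by
    have h1 : ∃ i, M.f i ≠ M'.f i := by
      by_contra h
      push_neg at h
      exact hne (PM_ext (funext h))
    obtain ⟨i, hi⟩ := h1
    rcases lt_or_ge (M.f i) i with h | h
    · exact ⟨i, h, hi⟩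
    · have hop : i < M.f i := lt_of_le_of_ne h (Ne.symm (M.nofix i))
      refine ⟨M.f i, by rw [M.invol]; exact hop, ?_⟩
      rw [M.invol]
      intro hcontra
      have h2 := congrArg M'.f hcontra
      rw [M'.invol] at h2
      exact hi h2.symm
  classical
  obtain ⟨c₀, hc₀⟩ := hexists
  have hSne : (Finset.univ.filter (fun d => M.f d < d ∧ M.f d ≠ M'.f d)).Nonempty :=
    ⟨c₀, Finset.mem_filter.mpr ⟨Finset.mem_univ _, hc₀⟩⟩
  obtain ⟨c, hcS, hcmin⟩ := Finset.exists_min_image _ id hSne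
  rw [Finset.mem_filter] at hcS
  obtain ⟨-, hcl, hmm⟩ := hcS
  have hmin : ∀ d, M.f d < d → M.f d ≠ M'.f d → c ≤ d := fun d h1 h2 =>
    hcmin d (Finset.mem_filter.mpr ⟨Finset.mem_univ _, h1, h2⟩)
  rcases lt_or_ge (M.f c) (M'.f c) with hlt | hle
  · exact C_aux M M' hM hT c hcl hmm hmin hlt
  · have hlt' : M'.f c < M.f c := lt_of_le_of_ne hle (Ne.symm hmm)
    have hT' : ∀ i, i < M'.f i ↔ i < M.f i := fun i => (hT i).symm
    have hcl' : M'.f c < c := by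
      have : ¬ c < M'.f c := fun h => (not_lt.mpr hcl.le) ((hT c).mpr h)
      exact lt_of_le_of_ne (not_lt.mp this) (M'.nofix c)
    have hmin' : ∀ d, M'.f d < d → M'.f d ≠ M.f d → c ≤ d := by
      intro d h1 h2
      have hMd : M.f d < d := by
        have : ¬ d < M.f d := fun h => (not_lt.mpr h1.le) ((hT d).mp h)
        exact lt_of_le_of_ne (not_lt.mp this) (M.nofix d)
      exact hmin d hMd (Ne.symm h2)
    exact C_aux M' M hM' hT' c hcl' (Ne.symm hmm) hmin' hlt'

lemma TT_eq_iff (M M' : PM n) (h : TT M' ⊆ TT M) : ∀ i, i < M.f i ↔ i < M'.f i := by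
  have heq : TT M' = TT M :=
    Finset.eq_of_subset_of_card_le h (by rw [card_TT, card_TT])
  intro i
  constructor
  · intro hi
    have : i ∈ TT M := Finset.mem_filter.mpr ⟨Finset.mem_univ _, hi⟩
    rw [← heq, TT, Finset.mem_filter] at this
    exact this.2
  · intro hi
    have : i ∈ TT M' := Finset.mem_filter.mpr ⟨Finset.mem_univ _, hi⟩
    rw [heq, TT, Finset.mem_filter] at this
    exact this.2

/-- The triangularity lemma: a nonzero evaluation forces a strictly smaller weight. -/
lemma weight_lt (M M' : PM n) (hM : Noncrossing M) (hM' : Noncrossing M')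
    (hne : M' ≠ M) (hnz : aeval (pt M) (DeltaM M') ≠ 0) : w M' < w M := by
  rw [DeltaM, map_prod, Finset.prod_ne_zero_iff] at hnz
  -- each block of M' has exactly one opener of M
  have key : ∀ i ∈ TT M',
      (i < M.f i ∧ ¬ M'.f i < M.f (M'.f i)) ∨ (¬ i < M.f i ∧ M'.f i < M.f (M'.f i)) := by
    intro i hi
    have hz := hnz i hi
    rw [aeval_Delta] at hz
    by_cases h1 : i < M.f i <;> by_cases h2 : M'.f i < M.f (M'.f i)
    · exfalso
      rw [pt_zero_op M h1, pt_one_op M h2, pt_zero_op M h2, pt_one_op M h1] at hz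
      simp at hz
    · exact Or.inl ⟨h1, h2⟩
    · exact Or.inr ⟨h1, h2⟩
    · exfalso
      rw [pt_zero_cl M h1, pt_one_cl M h2, pt_zero_cl M h2, pt_one_cl M h1] at hz
      simp at hz
  by_cases hall : ∀ i ∈ TT M', i < M.f i
  · -- then the opener sets agree and M = M', contradiction
    exfalso
    apply hne
    apply eq_of_same_openers M' M hM' hM
    intro i
    have hsub : TT M' ⊆ TT M := by
      intro i hi
      exact Finset.mem_filter.mpr ⟨Finset.mem_univ _, hall i hi⟩
    exact ((TT_eq_iff M M' hsub) i).symm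
  · -- strict inequality via the injection i ↦ (the M-opener of the block of i)
    push_neg at hall
    obtain ⟨i₀, hi₀, hi₀n⟩ := hall
    classical
    set g : Fin (2 * n) → Fin (2 * n) := fun i => if i < M.f i then i else M'.f i with hg
    have hg_mem : ∀ i ∈ TT M', g i ∈ TT M := by
      intro i hi
      rcases key i hi with ⟨h1, -⟩ | ⟨h1, h2⟩
      · simp only [hg, if_pos h1]
        exact Finset.mem_filter.mpr ⟨Finset.mem_univ _, h1⟩
      · simp only [hg, if_neg h1]
        exact Finset.mem_filter.mpr ⟨Finset.mem_univ _, h2⟩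
    have hg_ge : ∀ i ∈ TT M', i ≤ g i := by
      intro i hi
      rw [TT, Finset.mem_filter] at hi
      simp only [hg]
      split
      · exact le_refl _
      · exact hi.2.le
    have hg_inj : ∀ i₁ ∈ TT M', ∀ i₂ ∈ TT M', g i₁ = g i₂ → i₁ = i₂ := by
      intro i₁ h₁ i₂ h₂ h
      rw [TT, Finset.mem_filter] at h₁ h₂
      simp only [hg] at h
      split at h <;> split at h
      · exact h
      · exfalso
        -- h : i₁ = M'.f i₂
        have hfi : M'.f i₁ = i₂ := by rw [h, M'.invol]
        have l1 : i₁ < i₂ := hfi ▸ h₁.2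
        have l2 : i₂ < i₁ := by rw [← h] at h₂; exact h₂.2
        exact lt_irrefl _ (l1.trans l2)
      · exfalso
        -- h : M'.f i₁ = i₂
        have l1 : i₁ < i₂ := h ▸ h₁.2
        have hfi : M'.f i₂ = i₁ := by rw [← h, M'.invol]
        have l2 : i₂ < i₁ := hfi ▸ h₂.2
        exact lt_irrefl _ (l1.trans l2)
      · have := congrArg M'.f h
        rwa [M'.invol, M'.invol] at this
    have hstrict : ∑ i ∈ TT M', i.val < ∑ i ∈ TT M', (g i).val := by
      apply Finset.sum_lt_sum
      · intro i hi
        exact Fin.le_def.mp (hg_ge i hi)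
      · refine ⟨i₀, hi₀, ?_⟩
        have hlt : i₀ < g i₀ := by
          simp only [hg, if_neg (not_lt.mpr hi₀n)]
          rw [TT, Finset.mem_filter] at hi₀
          exact hi₀.2
        exact Fin.lt_def.mp hlt
    have himg : ∑ i ∈ TT M', (g i).val = ∑ j ∈ (TT M').image g, j.val :=
      (Finset.sum_image hg_inj).symm
    have hsub : (TT M').image g ⊆ TT M := by
      intro j hj
      rw [Finset.mem_image] at hj
      obtain ⟨i, hi, rfl⟩ := hj
      exact hg_mem i hi
    have hle : ∑ j ∈ (TT M').image g, j.val ≤ ∑ j ∈ TT M, j.val :=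
      Finset.sum_le_sum_of_subset hsub
    calc w M' = ∑ i ∈ TT M', i.val := rfl
      _ < ∑ i ∈ TT M', (g i).val := hstrict
      _ = ∑ j ∈ (TT M').image g, j.val := himg
      _ ≤ ∑ j ∈ TT M, j.val := hle
      _ = w M := rfl

end NCaux

open NCaux in
theorem deltaM_noncrossing_linearIndependent (n : ℕ) :
    LinearIndependent ℂ (fun M : {M : PM n // Noncrossing M} => DeltaM M.1) := by
  rw [linearIndependent_iff]
  intro l hl
  by_contra hne
  have hs : l.support.Nonempty := Finsupp.support_nonempty_iff.mpr hne
  obtain ⟨M₀, hM₀, hmin⟩ := Finset.exists_min_image l.support (fun M => w M.1) hs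
  have h0 := congrArg (aeval (pt M₀.1)) hl
  rw [Finsupp.linearCombination_apply, Finsupp.sum, map_sum, map_zero] at h0
  simp only [map_smul] at h0
  rw [Finset.sum_eq_single M₀ (fun b hb hbne => ?_) (fun h => absurd hM₀ h)] at h0
  · rw [aeval_DeltaM_self, smul_eq_mul, mul_one] at h0
    exact (Finsupp.mem_support_iff.mp hM₀) h0
  · by_cases hz : aeval (pt M₀.1) (DeltaM b.1) = 0
    · rw [hz, smul_zero]
    · exfalso
      have hne' : b.1 ≠ M₀.1 := fun h => hbne (Subtype.ext h)
      have := weight_lt M₀.1 b.1 M₀.2 b.2 hne' hz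
      exact absurd (hmin b hb) (not_le.mpr this)
end
end

section
/- The operators defined on the free ℂ-vector space W_n with basis indexed by noncrossing perfect matchings of {1,...,2n}, by s_i.w_M = -w_M if {i,i+1} is a block of M, and s_i.w_M = w_M + w_{M'} otherwise (where M' replaces the blocks {a,i},{b,i+1} containing i and i+1 by {a,b},{i,i+1}), satisfy the Coxeter relations of S_{2n}: s_i² = id, s_i s_j = s_j s_i for |i-j| ≥ 2, and s_i s_{i+1} s_i = s_{i+1} s_i s_{i+1}. -/
open MvPolynomial Finset

noncomputable section

namespace WebAux

variable {n : ℕ}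

lemma _root_.PM.ff (M : PM n) (x : Fin (2 * n)) : M.f (M.f x) = x := M.invol x

lemma _root_.PM.f_inj_s10 (M : PM n) {x y : Fin (2 * n)} (h : M.f x = M.f y) : x = y := by
  have := congrArg M.f h; rwa [M.invol, M.invol] at this

/-- Conjugating the involution of `M` by the transposition `(q, a)`.  When `a = M.f p`,
this replaces the blocks `{p, a}` and `{q, b}` (with `b = M.f q`) by `{p, q}` and `{a, b}`. -/
def uncross (M : PM n) (q a : Fin (2 * n)) : PM n where
  f x := Equiv.swap q a (M.f (Equiv.swap q a x))
  invol x := by simp [M.invol]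
  nofix x h := by
    apply M.nofix (Equiv.swap q a x)
    have := congrArg (Equiv.swap q a) h
    simpa using this

lemma uncross_apply (M : PM n) (q a x : Fin (2 * n)) :
    (uncross M q a).f x = Equiv.swap q a (M.f (Equiv.swap q a x)) := rfl

lemma sw_f_p (M : PM n) {p q : Fin (2 * n)} (hpq : p ≠ q) :
    (uncross M q (M.f p)).f p = q := by
  rw [uncross_apply, Equiv.swap_apply_of_ne_of_ne hpq (Ne.symm (M.nofix p)),
    Equiv.swap_apply_right]

lemma sw_f_q (M : PM n) {p q : Fin (2 * n)} (hpq : p ≠ q) :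
    (uncross M q (M.f p)).f q = p := by
  rw [uncross_apply, Equiv.swap_apply_left, M.ff,
    Equiv.swap_apply_of_ne_of_ne hpq (Ne.symm (M.nofix p))]

lemma sw_f_a (M : PM n) {p q : Fin (2 * n)} (hpq : p ≠ q) :
    (uncross M q (M.f p)).f (M.f p) = M.f q := by
  rw [uncross_apply, Equiv.swap_apply_right,
    Equiv.swap_apply_of_ne_of_ne (M.nofix q) (fun e => hpq (M.f_inj_s10 e).symm)]

lemma sw_f_b (M : PM n) {p q : Fin (2 * n)} (hpq : p ≠ q) :
    (uncross M q (M.f p)).f (M.f q) = M.f p := by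
  rw [uncross_apply,
    Equiv.swap_apply_of_ne_of_ne (M.nofix q) (fun e => hpq (M.f_inj_s10 e).symm),
    M.ff, Equiv.swap_apply_left]

lemma sw_f_other (M : PM n) {p q k : Fin (2 * n)} (h1 : k ≠ p) (h2 : k ≠ q)
    (h3 : k ≠ M.f p) (h4 : k ≠ M.f q) :
    (uncross M q (M.f p)).f k = M.f k := by
  rw [uncross_apply, Equiv.swap_apply_of_ne_of_ne h2 h3,
    Equiv.swap_apply_of_ne_of_ne (fun e => h4 (by rw [← e, M.ff]))
      (fun e => h1 (by rw [← M.ff k, e, M.ff]))]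

lemma uncross_nc (M : PM n) (hM : Noncrossing M) {p q : Fin (2 * n)}
    (hq : (q : ℕ) = (p : ℕ) + 1) (h : M.f p ≠ q) :
    Noncrossing (uncross M q (M.f p)) := by
  have key : ∀ x y z w : Fin (2 * n), (x : ℕ) < y → (y : ℕ) < z → (z : ℕ) < w →
      M.f x = z → M.f y = w → False := by
    intro x y z w h1 h2 h3 h4 h5
    exact hM ⟨x, y, z, w, Fin.lt_def.mpr h1, Fin.lt_def.mpr h2, Fin.lt_def.mpr h3, h4, h5⟩
  have hpqF : p ≠ q := fun e => by have := congrArg Fin.val e; omega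
  have hfa : M.f (M.f p) = p := M.ff p
  have hfb : M.f (M.f q) = q := M.ff q
  have hap : ((M.f p : ℕ)) ≠ p := fun e => M.nofix p (Fin.ext e)
  have haq : ((M.f p : ℕ)) ≠ q := fun e => h (Fin.ext e)
  have hbq : ((M.f q : ℕ)) ≠ q := fun e => M.nofix q (Fin.ext e)
  have hbp : ((M.f q : ℕ)) ≠ p := by
    intro e
    have e' : M.f q = p := Fin.ext e
    exact h (by rw [← e', hfb])
  have hab : ((M.f p : ℕ)) ≠ M.f q := fun e => hpqF (M.f_inj_s10 (Fin.ext e))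
  have config : (((M.f q : ℕ)) < M.f p ∧ ((M.f p : ℕ)) < p) ∨
      (((M.f p : ℕ)) < p ∧ (q : ℕ) < M.f q) ∨
      ((q : ℕ) < M.f q ∧ ((M.f q : ℕ)) < M.f p) := by
    have ha' : ((M.f p : ℕ)) < p ∨ (q : ℕ) < M.f p := by omega
    have hb' : ((M.f q : ℕ)) < p ∨ (q : ℕ) < M.f q := by omega
    rcases ha' with ha' | ha' <;> rcases hb' with hb' | hb'
    · rcases Nat.lt_or_ge (M.f p : ℕ) (M.f q : ℕ) with hc | hc
      · exact absurd (key (M.f p) (M.f q) p q hc hb' (by omega) hfa hfb) (by simp)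
      · exact Or.inl ⟨by omega, ha'⟩
    · exact Or.inr (Or.inl ⟨ha', hb'⟩)
    · exact absurd (key (M.f q) p q (M.f p) hb' (by omega) ha' hfb rfl) (by simp)
    · rcases Nat.lt_or_ge (M.f p : ℕ) (M.f q : ℕ) with hc | hc
      · exact absurd (key p q (M.f p) (M.f q) (by omega) ha' hc rfl rfl) (by simp)
      · exact Or.inr (Or.inr ⟨hb', by omega⟩)
  rintro ⟨x, y, z, w, hxy, hyz, hzw, hxz, hyw⟩
  set N := uncross M q (M.f p) with hN
  rw [Fin.lt_def] at hxy hyz hzw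
  have hNp : N.f p = q := sw_f_p M hpqF
  have hNq : N.f q = p := sw_f_q M hpqF
  have hNa : N.f (M.f p) = M.f q := sw_f_a M hpqF
  have hNb : N.f (M.f q) = M.f p := sw_f_b M hpqF
  have hzx : N.f z = x := by rw [← hxz, N.invol]
  have hwy : N.f w = y := by rw [← hyw, N.invol]
  -- x, y, z, w are all distinct from p and q
  have hxp : (x : ℕ) ≠ p := by
    intro e; have e' : x = p := Fin.ext e
    rw [e', hNp] at hxz; have := congrArg Fin.val hxz; omega
  have hxq : (x : ℕ) ≠ q := by
    intro e; have e' : x = q := Fin.ext e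
    rw [e', hNq] at hxz; have := congrArg Fin.val hxz; omega
  have hyp' : (y : ℕ) ≠ p := by
    intro e; have e' : y = p := Fin.ext e
    rw [e', hNp] at hyw; have := congrArg Fin.val hyw; omega
  have hyq : (y : ℕ) ≠ q := by
    intro e; have e' : y = q := Fin.ext e
    rw [e', hNq] at hyw; have := congrArg Fin.val hyw; omega
  have hzp : (z : ℕ) ≠ p := by
    intro e; have e' : z = p := Fin.ext e
    rw [e', hNp] at hzx; have := congrArg Fin.val hzx; omega
  have hzq : (z : ℕ) ≠ q := by
    intro e; have e' : z = q := Fin.ext e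
    rw [e', hNq] at hzx; have := congrArg Fin.val hzx; omega
  have hwp : (w : ℕ) ≠ p := by
    intro e; have e' : w = p := Fin.ext e
    rw [e', hNp] at hwy; have := congrArg Fin.val hwy; omega
  have hwq : (w : ℕ) ≠ q := by
    intro e; have e' : w = q := Fin.ext e
    rw [e', hNq] at hwy; have := congrArg Fin.val hwy; omega
  -- helper to compute N.f on points away from p, q, a, b
  have hother : ∀ k : Fin (2 * n), (k : ℕ) ≠ p → (k : ℕ) ≠ q → k ≠ M.f p → k ≠ M.f q →
      M.f k = N.f k := by
    intro k k1 k2 k3 k4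
    exact (sw_f_other M (fun e => k1 (congrArg Fin.val e)) (fun e => k2 (congrArg Fin.val e))
      k3 k4).symm
  by_cases hxa : x = M.f p
  · -- x = a, z = b, so a < b : config 2
    have hzb : z = M.f q := by rw [← hxz, hxa, hNa]
    have hab' : ((M.f p : ℕ)) < M.f q := by rw [← hxa, ← hzb]; omega
    rcases config with ⟨c1, c2⟩ | ⟨c1, c2⟩ | ⟨c1, c2⟩
    · omega
    · -- a < p < q < b ; y in (a,b), M.f y = w, w > b
      have hya : y ≠ M.f p := fun e => by rw [← hxa] at e; omega
      have hyb : y ≠ M.f q := fun e => by rw [← hzb] at e; omega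
      have hwa : w ≠ M.f p := fun e => by
        have := congrArg Fin.val e; rw [← hxa] at this; omega
      have hwb : w ≠ M.f q := fun e => by
        have := congrArg Fin.val e; rw [← hzb] at this; omega
      have hMy : M.f y = w := by rw [hother y hyp' hyq hya hyb, hyw]
      rcases Nat.lt_or_ge (y : ℕ) (p : ℕ) with hyc | hyc
      · exact key (M.f p) y p w (by rw [hxa] at hxy; omega) hyc
          (by have := congrArg Fin.val hzb; omega) hfa hMy
      · exact key q y (M.f q) w (by omega) (by rw [hzb] at hyz; omega)
          (by rw [hzb] at hzw; omega) rfl hMy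
    · omega
  · by_cases hxb : x = M.f q
    · -- x = b, z = a, so b < a : config 1 or 3
      have hza : z = M.f p := by rw [← hxz, hxb, hNb]
      have hya : y ≠ M.f p := fun e => by
        have := congrArg Fin.val e; rw [← hza] at this; omega
      have hyb : y ≠ M.f q := fun e => by
        have := congrArg Fin.val e; rw [← hxb] at this; omega
      have hwa : w ≠ M.f p := fun e => by
        have := congrArg Fin.val e; rw [← hza] at this; omega
      have hwb : w ≠ M.f q := fun e => by
        have := congrArg Fin.val e; rw [← hxb] at this; omega
      have hMy : M.f y = w := by rw [hother y hyp' hyq hya hyb, hyw]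
      rcases config with ⟨c1, c2⟩ | ⟨c1, c2⟩ | ⟨c1, c2⟩
      · -- b < a < p
        rcases Nat.lt_or_ge (w : ℕ) (p : ℕ) with hwc | hwc
        · exact key y (M.f p) w p (by rw [hza] at hyz; omega)
            (by rw [← hza]; omega) hwc hMy hfa
        · exact key (M.f q) y q w (by rw [hxb] at hxy; omega)
            (by have := congrArg Fin.val hza; omega)
            (by have h5 : (w:ℕ) ≠ q := hwq; omega) hfb hMy
      · -- config 2 : a < b, contradiction with z = a < w and x = b < y < z
        have := congrArg Fin.val hza; have := congrArg Fin.val hxb; omega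
      · -- q < b < a
        exact key p y (M.f p) w (by have := congrArg Fin.val hxb; omega)
          (by rw [hza] at hyz; omega) (by rw [← hza]; omega) rfl hMy
    · -- x not in {p,q,a,b}; M.f x = z, z not in {a, b}
      have hza : z ≠ M.f p := by
        intro e; rw [e] at hzx; rw [hNa] at hzx; exact hxb hzx.symm
      have hzb : z ≠ M.f q := by
        intro e; rw [e] at hzx; rw [hNb] at hzx; exact hxa hzx.symm
      have hMx : M.f x = z := by rw [hother x hxp hxq hxa hxb, hxz]
      by_cases hya : y = M.f p
      · -- y = a, w = b, a < b : config 2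
        have hwb : w = M.f q := by rw [← hyw, hya, hNa]
        rcases config with ⟨c1, c2⟩ | ⟨c1, c2⟩ | ⟨c1, c2⟩
        · rw [hya] at hyz hxy; rw [hwb] at hzw; omega
        · rcases Nat.lt_or_ge (z : ℕ) (p : ℕ) with hzc | hzc
          · exact key x (M.f p) z p (by rw [← hya]; omega) (by rw [hya] at hyz; omega)
              hzc hMx hfa
          · exact key x q z (M.f q) (by rw [hya] at hxy; omega) (by omega)
              (by rw [hwb] at hzw; omega) hMx rfl
        · rw [hya] at hyz hxy; rw [hwb] at hzw; omega
      · by_cases hyb : y = M.f q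
        · -- y = b, w = a, b < a : config 1 or 3
          have hwa : w = M.f p := by rw [← hyw, hyb, hNb]
          rcases config with ⟨c1, c2⟩ | ⟨c1, c2⟩ | ⟨c1, c2⟩
          · -- b < a < p
            exact key x (M.f q) z q (by rw [← hyb]; omega) (by rw [hyb] at hyz; omega)
              (by rw [hwa] at hzw; omega) hMx hfb
          · rw [hyb] at hyz hxy; rw [hwa] at hzw; omega
          · -- q < b < a
            rcases Nat.lt_or_ge (x : ℕ) (p : ℕ) with hxc | hxc
            · exact key x p z (M.f p) hxc (by rw [hyb] at hyz; omega)
                (by rw [hwa] at hzw; omega) hMx rfl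
            · exact key q x (M.f q) z (by omega) (by rw [hyb] at hxy; omega)
                (by rw [hyb] at hyz; omega) rfl hMx
        · have hMy : M.f y = w := by rw [hother y hyp' hyq hya hyb, hyw]
          exact key x y z w hxy hyz hzw hMx hMy

lemma diamond (M : PM n) {p q r s : Fin (2 * n)}
    (hpq : p ≠ q) (hrs : r ≠ s) (hpr : p ≠ r) (hps : p ≠ s) (hqr : q ≠ r) (hqs : q ≠ s)
    (ha : M.f p ≠ q) (hc : M.f r ≠ s)
    (hx1 : ¬(M.f p = s ∧ M.f q = r)) (hx2 : ¬(M.f p = r ∧ M.f q = s)) :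
    (uncross M s (M.f r)).f p ≠ q ∧
    (uncross M q (M.f p)).f r ≠ s ∧
    (uncross (uncross M s (M.f r)) q ((uncross M s (M.f r)).f p)).f r = s ∧
    (uncross (uncross M s (M.f r)) q ((uncross M s (M.f r)).f p)).f
        ((uncross M q (M.f p)).f r) = (uncross M q (M.f p)).f s ∧
    (∀ k, k ≠ r → k ≠ s → k ≠ (uncross M q (M.f p)).f r → k ≠ (uncross M q (M.f p)).f s →
      (uncross (uncross M s (M.f r)) q ((uncross M s (M.f r)).f p)).f k
        = (uncross M q (M.f p)).f k) := by
  have corr : ∀ x y : Fin (2 * n), M.f x = y → M.f y = x := fun x y e => by rw [← e, M.ff]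
  have ncorr : ∀ x y : Fin (2 * n), M.f x ≠ y → x ≠ M.f y :=
    fun x y e e' => e (corr y x e'.symm)
  -- the two intermediate matchings
  have hMjr : (uncross M s (M.f r)).f r = s := sw_f_p M hrs
  have hMjs : (uncross M s (M.f r)).f s = r := sw_f_q M hrs
  have hMip : (uncross M q (M.f p)).f p = q := sw_f_p M hpq
  have hMiq : (uncross M q (M.f p)).f q = p := sw_f_q M hpq
  have hdr : M.f s ≠ r := fun e => hc (corr s r e)
  by_cases har : M.f p = r
  · -- case E1 : partner of p is r
    have hcp : M.f r = p := corr p r har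
    have hbs : M.f q ≠ s := fun e => hx2 ⟨har, e⟩
    have hbr : M.f q ≠ r := fun e => hpq (M.f_inj_s10 (har.trans e.symm))
    have hsq : M.f s ≠ q := fun e => hbs (corr s q e)
    have hMjp : (uncross M s (M.f r)).f p = M.f s := by rw [← hcp]; exact sw_f_a M hrs
    have hMjq : (uncross M s (M.f r)).f q = M.f q :=
      sw_f_other M hqr hqs (fun e => hpq (e.trans hcp).symm) (ncorr q s hbs)
    have hMir : (uncross M q (M.f p)).f r = M.f q := by rw [← har]; exact sw_f_a M hpq
    have hMis : (uncross M q (M.f p)).f s = M.f s :=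
      sw_f_other M (Ne.symm hps) (Ne.symm hqs) (fun e => hrs ((har ▸ e : s = r)).symm)
        (ncorr s q hsq)
    refine ⟨by rw [hMjp]; exact hsq, by rw [hMir]; exact hbs, ?_, ?_, ?_⟩
    · rw [sw_f_other (uncross M s (M.f r)) (Ne.symm hpr) (Ne.symm hqr)
        (by rw [hMjp]; exact Ne.symm hdr) (by rw [hMjq]; exact Ne.symm hbr), hMjr]
    · rw [hMir, hMis]
      exact (congrArg _ hMjq).symm.trans ((sw_f_b (uncross M s (M.f r)) hpq).trans hMjp)
    · intro k k1 k2 k3 k4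
      rw [hMir] at k3; rw [hMis] at k4
      by_cases kp : k = p
      · subst kp; rw [sw_f_p (uncross M s (M.f r)) hpq, hMip]
      · by_cases kq : k = q
        · subst kq; rw [sw_f_q (uncross M s (M.f r)) hpq, hMiq]
        · rw [sw_f_other (uncross M s (M.f r)) kp kq (by rw [hMjp]; exact k4)
            (by rw [hMjq]; exact k3),
            sw_f_other M k1 k2 (by rw [hcp]; exact kp) k4,
            ← sw_f_other M kp kq (by rw [har]; exact k1) k3]
  · by_cases has : M.f p = s
    · -- case E2 : partner of p is s
      have hdp : M.f s = p := corr p s has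
      have hbr : M.f q ≠ r := fun e => hx1 ⟨has, e⟩
      have hbs : M.f q ≠ s := fun e => hpq (M.f_inj_s10 (has.trans e.symm))
      have hrq : M.f r ≠ q := fun e => hbr (corr r q e)
      have hMjp : (uncross M s (M.f r)).f p = M.f r := by rw [← hdp]; exact sw_f_b M hrs
      have hMjq : (uncross M s (M.f r)).f q = M.f q :=
        sw_f_other M hqr hqs (ncorr q r hbr) (fun e => hpq (e.trans hdp).symm)
      have hMir : (uncross M q (M.f p)).f r = M.f r :=
        sw_f_other M (Ne.symm hpr) (Ne.symm hqr)
          (fun e => hrs (has ▸ e : r = s)) (ncorr r q hrq)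
      have hMis : (uncross M q (M.f p)).f s = M.f q := by rw [← has]; exact sw_f_a M hpq
      refine ⟨by rw [hMjp]; exact hrq, by rw [hMir]; exact hc, ?_, ?_, ?_⟩
      · rw [sw_f_other (uncross M s (M.f r)) (Ne.symm hpr) (Ne.symm hqr)
          (by rw [hMjp]; exact Ne.symm (M.nofix r)) (by rw [hMjq]; exact Ne.symm hbr), hMjr]
      · rw [hMir, hMis]
        exact (congrArg _ hMjp).symm.trans ((sw_f_a (uncross M s (M.f r)) hpq).trans hMjq)
      · intro k k1 k2 k3 k4
        rw [hMir] at k3; rw [hMis] at k4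
        by_cases kp : k = p
        · subst kp; rw [sw_f_p (uncross M s (M.f r)) hpq, hMip]
        · by_cases kq : k = q
          · subst kq; rw [sw_f_q (uncross M s (M.f r)) hpq, hMiq]
          · rw [sw_f_other (uncross M s (M.f r)) kp kq (by rw [hMjp]; exact k3)
              (by rw [hMjq]; exact k4),
              sw_f_other M k1 k2 k3 (by rw [hdp]; exact kp),
              ← sw_f_other M kp kq (by rw [has]; exact k2) k4]
    · by_cases hbr : M.f q = r
      · -- case E3 : partner of q is r
        have hcq : M.f r = q := corr q r hbr
        have hbs : M.f q ≠ s := fun e => hrs (hbr ▸ e : r = s)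
        have hMjp : (uncross M s (M.f r)).f p = M.f p :=
          sw_f_other M hpr hps (fun e => hpq (e.trans hcq)) (ncorr p s has)
        have hMjq : (uncross M s (M.f r)).f q = M.f s := by rw [← hcq]; exact sw_f_a M hrs
        have hMir : (uncross M q (M.f p)).f r = M.f p := by rw [← hbr]; exact sw_f_b M hpq
        have hMis : (uncross M q (M.f p)).f s = M.f s :=
          sw_f_other M (Ne.symm hps) (Ne.symm hqs) (Ne.symm has)
            (fun e => hrs (hbr ▸ e : s = r).symm)
        refine ⟨by rw [hMjp]; exact ha, by rw [hMir]; exact has, ?_, ?_, ?_⟩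
        · rw [sw_f_other (uncross M s (M.f r)) (Ne.symm hpr) (Ne.symm hqr)
            (by rw [hMjp]; exact fun e => har e.symm)
            (by rw [hMjq]; exact Ne.symm hdr), hMjr]
        · rw [hMir, hMis]
          exact (congrArg _ hMjp).symm.trans ((sw_f_a (uncross M s (M.f r)) hpq).trans hMjq)
        · intro k k1 k2 k3 k4
          rw [hMir] at k3; rw [hMis] at k4
          by_cases kp : k = p
          · subst kp; rw [sw_f_p (uncross M s (M.f r)) hpq, hMip]
          · by_cases kq : k = q
            · subst kq; rw [sw_f_q (uncross M s (M.f r)) hpq, hMiq]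
            · rw [sw_f_other (uncross M s (M.f r)) kp kq (by rw [hMjp]; exact k3)
                (by rw [hMjq]; exact k4),
                sw_f_other M k1 k2 (by rw [hcq]; exact kq) k4,
                ← sw_f_other M kp kq k3 (by rw [hbr]; exact k1)]
      · by_cases hbs : M.f q = s
        · -- case E4 : partner of q is s
          have hdq : M.f s = q := corr q s hbs
          have hMjp : (uncross M s (M.f r)).f p = M.f p :=
            sw_f_other M hpr hps (ncorr p r har) (fun e => hpq (e.trans hdq))
          have hMjq : (uncross M s (M.f r)).f q = M.f r := by rw [← hdq]; exact sw_f_b M hrs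
          have hMir : (uncross M q (M.f p)).f r = M.f r :=
            sw_f_other M (Ne.symm hpr) (Ne.symm hqr) (Ne.symm har)
              (fun e => hrs (e.trans hbs))
          have hMis : (uncross M q (M.f p)).f s = M.f p := by rw [← hbs]; exact sw_f_b M hpq
          refine ⟨by rw [hMjp]; exact ha, by rw [hMir]; exact hc, ?_, ?_, ?_⟩
          · rw [sw_f_other (uncross M s (M.f r)) (Ne.symm hpr) (Ne.symm hqr)
              (by rw [hMjp]; exact Ne.symm har) 
              (by rw [hMjq]; exact Ne.symm (M.nofix r)), hMjr]
          · rw [hMir, hMis]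
            exact (congrArg _ hMjq).symm.trans ((sw_f_b (uncross M s (M.f r)) hpq).trans hMjp)
          · intro k k1 k2 k3 k4
            rw [hMir] at k3; rw [hMis] at k4
            by_cases kp : k = p
            · subst kp; rw [sw_f_p (uncross M s (M.f r)) hpq, hMip]
            · by_cases kq : k = q
              · subst kq; rw [sw_f_q (uncross M s (M.f r)) hpq, hMiq]
              · rw [sw_f_other (uncross M s (M.f r)) kp kq (by rw [hMjp]; exact k4)
                  (by rw [hMjq]; exact k3),
                  sw_f_other M k1 k2 k3 (by rw [hdq]; exact kq),
                  ← sw_f_other M kp kq k4 (by rw [hbs]; exact k2)]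
        · -- case E5 : no incidence
          have hMjp : (uncross M s (M.f r)).f p = M.f p :=
            sw_f_other M hpr hps (ncorr p r har) (ncorr p s has)
          have hMjq : (uncross M s (M.f r)).f q = M.f q :=
            sw_f_other M hqr hqs (ncorr q r hbr) (ncorr q s hbs)
          have hMir : (uncross M q (M.f p)).f r = M.f r :=
            sw_f_other M (Ne.symm hpr) (Ne.symm hqr) (Ne.symm har) (Ne.symm hbr)
          have hMis : (uncross M q (M.f p)).f s = M.f s :=
            sw_f_other M (Ne.symm hps) (Ne.symm hqs) (Ne.symm has) (Ne.symm hbs)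
          have hfrp : M.f r ≠ p := fun e => har (corr r p e)
          have hfrq : M.f r ≠ q := fun e => hbr (corr r q e)
          have hfsp : M.f s ≠ p := fun e => has (corr s p e)
          have hfsq : M.f s ≠ q := fun e => hbs (corr s q e)
          refine ⟨by rw [hMjp]; exact ha, by rw [hMir]; exact hc, ?_, ?_, ?_⟩
          · rw [sw_f_other (uncross M s (M.f r)) (Ne.symm hpr) (Ne.symm hqr)
              (by rw [hMjp]; exact Ne.symm har)
              (by rw [hMjq]; exact Ne.symm hbr), hMjr]
          · rw [hMir, hMis,
              sw_f_other (uncross M s (M.f r)) hfrp hfrq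
                (by rw [hMjp]; exact fun e => hpr (M.f_inj_s10 e.symm))
                (by rw [hMjq]; exact fun e => hqr (M.f_inj_s10 e).symm),
              sw_f_a M hrs]
          · intro k k1 k2 k3 k4
            rw [hMir] at k3; rw [hMis] at k4
            by_cases kp : k = p
            · subst kp; rw [sw_f_p (uncross M s (M.f r)) hpq, hMip]
            · by_cases kq : k = q
              · subst kq; rw [sw_f_q (uncross M s (M.f r)) hpq, hMiq]
              · by_cases ka : k = M.f p
                · subst ka
                  exact ((congrArg _ hMjp).symm.trans ((sw_f_a (uncross M s (M.f r)) hpq).trans hMjq)).trans (sw_f_a M hpq).symm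
                · by_cases kb : k = M.f q
                  · subst kb
                    exact ((congrArg _ hMjq).symm.trans ((sw_f_b (uncross M s (M.f r)) hpq).trans hMjp)).trans (sw_f_b M hpq).symm
                  · rw [sw_f_other (uncross M s (M.f r)) kp kq (by rw [hMjp]; exact ka)
                      (by rw [hMjq]; exact kb),
                      sw_f_other M k1 k2 k3 k4,
                      ← sw_f_other M kp kq ka kb]

lemma mk_ne {m a b : ℕ} {ha : a < m} {hb : b < m} (h : a ≠ b) :
    (⟨a, ha⟩ : Fin m) ≠ ⟨b, hb⟩ := fun e => h (congrArg Fin.val e)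

/-- In a noncrossing matching, `p` is never matched with `p+2`. -/
lemma no_short_arc (M : PM n) (hM : Noncrossing M) {p q r : Fin (2 * n)}
    (hq : (q : ℕ) = (p : ℕ) + 1) (hr : (r : ℕ) = (p : ℕ) + 2) : M.f p ≠ r := by
  intro e
  have key : ∀ x y z w : Fin (2 * n), (x : ℕ) < y → (y : ℕ) < z → (z : ℕ) < w →
      M.f x = z → M.f y = w → False := fun x y z w h1 h2 h3 h4 h5 =>
    hM ⟨x, y, z, w, Fin.lt_def.mpr h1, Fin.lt_def.mpr h2, Fin.lt_def.mpr h3, h4, h5⟩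
  have hrp : M.f r = p := by rw [← e, M.ff]
  have hbq : ((M.f q : ℕ)) ≠ q := fun e' => M.nofix q (Fin.ext e')
  have hbp : ((M.f q : ℕ)) ≠ p := by
    intro e'
    have e2 : M.f q = p := Fin.ext e'
    have e3 : M.f p = q := by rw [← e2, M.ff]
    rw [e] at e3
    have := congrArg Fin.val e3; omega
  have hbr : ((M.f q : ℕ)) ≠ r := by
    intro e'
    have e2 : M.f q = r := Fin.ext e'
    have e3 : M.f r = q := by rw [← e2, M.ff]
    rw [hrp] at e3
    have := congrArg Fin.val e3; omega
  have : ((M.f q : ℕ)) < p ∨ (r : ℕ) < M.f q := by omega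
  rcases this with hlt | hgt
  · exact key (M.f q) p q r hlt (by omega) (by omega) (M.ff q) e
  · exact key p q r (M.f q) (by omega) (by omega) hgt e rfl

/-- The subtype of noncrossing matchings. -/
abbrev NCM (n : ℕ) := {M : PM n // Noncrossing M}

/-- The uncrossing operation at position `i`, as a noncrossing matching. -/
def swapNC (M : NCM n) (i : ℕ) (hi : i + 1 < 2 * n)
    (h : M.1.f ⟨i, Nat.lt_of_succ_lt hi⟩ ≠ ⟨i + 1, hi⟩) : NCM n :=
  ⟨uncross M.1 ⟨i + 1, hi⟩ (M.1.f ⟨i, Nat.lt_of_succ_lt hi⟩),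
    uncross_nc M.1 M.2 rfl h⟩

end WebAux

open WebAux in
theorem web_operators_coxeter_relations (n : ℕ)
    (S : ℕ → (({M : PM n // Noncrossing M} →₀ ℂ) →ₗ[ℂ] ({M : PM n // Noncrossing M} →₀ ℂ)))
    (hS : ∀ (i : ℕ) (hi : i + 1 < 2 * n) (M : {M : PM n // Noncrossing M}),
      (M.1.f ⟨i, Nat.lt_of_succ_lt hi⟩ = ⟨i + 1, hi⟩ →
        S i (Finsupp.single M 1) = - Finsupp.single M 1) ∧
      (M.1.f ⟨i, Nat.lt_of_succ_lt hi⟩ ≠ ⟨i + 1, hi⟩ →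
        ∀ M' : {M : PM n // Noncrossing M},
          M'.1.f ⟨i, Nat.lt_of_succ_lt hi⟩ = ⟨i + 1, hi⟩ →
          M'.1.f (M.1.f ⟨i, Nat.lt_of_succ_lt hi⟩) = M.1.f ⟨i + 1, hi⟩ →
          (∀ k, k ≠ ⟨i, Nat.lt_of_succ_lt hi⟩ → k ≠ ⟨i + 1, hi⟩ →
            k ≠ M.1.f ⟨i, Nat.lt_of_succ_lt hi⟩ → k ≠ M.1.f ⟨i + 1, hi⟩ →
            M'.1.f k = M.1.f k) →
          S i (Finsupp.single M 1) = Finsupp.single M 1 + Finsupp.single M' 1)) :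
    (∀ i : ℕ, i + 1 < 2 * n → S i ∘ₗ S i = LinearMap.id) ∧
    (∀ i j : ℕ, i + 1 < 2 * n → j + 1 < 2 * n → i + 2 ≤ j → S i ∘ₗ S j = S j ∘ₗ S i) ∧
    (∀ i : ℕ, i + 2 < 2 * n →
      S i ∘ₗ S (i + 1) ∘ₗ S i = S (i + 1) ∘ₗ S i ∘ₗ S (i + 1)) := by
  classical
  have hone : ∀ (i : ℕ) (hi : i + 1 < 2 * n) (M : NCM n),
      M.1.f ⟨i, Nat.lt_of_succ_lt hi⟩ = ⟨i + 1, hi⟩ →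
      S i (Finsupp.single M 1) = -Finsupp.single M 1 := fun i hi M h => (hS i hi M).1 h
  have hgen : ∀ (i : ℕ) (hi : i + 1 < 2 * n) (M M' : NCM n),
      M.1.f ⟨i, Nat.lt_of_succ_lt hi⟩ ≠ ⟨i + 1, hi⟩ →
      M'.1.f ⟨i, Nat.lt_of_succ_lt hi⟩ = ⟨i + 1, hi⟩ →
      M'.1.f (M.1.f ⟨i, Nat.lt_of_succ_lt hi⟩) = M.1.f ⟨i + 1, hi⟩ →
      (∀ k, k ≠ ⟨i, Nat.lt_of_succ_lt hi⟩ → k ≠ ⟨i + 1, hi⟩ →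
        k ≠ M.1.f ⟨i, Nat.lt_of_succ_lt hi⟩ → k ≠ M.1.f ⟨i + 1, hi⟩ →
        M'.1.f k = M.1.f k) →
      S i (Finsupp.single M 1) = Finsupp.single M 1 + Finsupp.single M' 1 :=
    fun i hi M M' h h1 h2 h3 => (hS i hi M).2 h M' h1 h2 h3
  have hpos : ∀ (i : ℕ) (hi : i + 1 < 2 * n) (M : NCM n)
      (h : M.1.f ⟨i, Nat.lt_of_succ_lt hi⟩ ≠ ⟨i + 1, hi⟩),
      S i (Finsupp.single M 1)
        = Finsupp.single M 1 + Finsupp.single (swapNC M i hi h) 1 :=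
    fun i hi M h =>
      hgen i hi M (swapNC M i hi h) h (sw_f_p M.1 (mk_ne (by omega)))
        (sw_f_a M.1 (mk_ne (by omega))) (fun k k1 k2 k3 k4 => sw_f_other M.1 k1 k2 k3 k4)
  have hext : ∀ f g : (NCM n →₀ ℂ) →ₗ[ℂ] (NCM n →₀ ℂ),
      (∀ M : NCM n, f (Finsupp.single M 1) = g (Finsupp.single M 1)) → f = g := by
    intro f g hfg
    apply Finsupp.lhom_ext
    intro a b
    have hb : (Finsupp.single a b : NCM n →₀ ℂ) = b • Finsupp.single a 1 := by
      rw [Finsupp.smul_single, smul_eq_mul, mul_one]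
    rw [hb, map_smul, map_smul, hfg]
  refine ⟨?_, ?_, ?_⟩
  · -- s_i ^ 2 = 1
    intro i hi
    apply hext
    intro M
    rw [LinearMap.comp_apply, LinearMap.id_apply]
    by_cases h : M.1.f ⟨i, Nat.lt_of_succ_lt hi⟩ = ⟨i + 1, hi⟩
    · simp only [hone i hi M h, map_neg, neg_neg]
    · simp only [hpos i hi M h, map_add,
        hone i hi (swapNC M i hi h) (sw_f_p M.1 (mk_ne (by omega)))]
      abel
  · -- commuting relation
    intro i j hi hj hij
    apply hext
    intro M
    rw [LinearMap.comp_apply, LinearMap.comp_apply]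
    by_cases h1 : M.1.f ⟨i, Nat.lt_of_succ_lt hi⟩ = ⟨i + 1, hi⟩
    · by_cases h2 : M.1.f ⟨j, Nat.lt_of_succ_lt hj⟩ = ⟨j + 1, hj⟩
      · simp only [hone i hi M h1, hone j hj M h2, map_neg, neg_neg]
      · have hc1 : (⟨i, Nat.lt_of_succ_lt hi⟩ : Fin (2 * n)) ≠ M.1.f ⟨j, Nat.lt_of_succ_lt hj⟩ := by
          intro e
          have e2 : M.1.f ⟨i, Nat.lt_of_succ_lt hi⟩ = ⟨j, Nat.lt_of_succ_lt hj⟩ := by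
            rw [e, M.1.ff]
          rw [h1] at e2
          rw [Fin.mk.injEq] at e2; omega
        have hc2 : (⟨i, Nat.lt_of_succ_lt hi⟩ : Fin (2 * n)) ≠ M.1.f ⟨j + 1, hj⟩ := by
          intro e
          have e2 : M.1.f ⟨i, Nat.lt_of_succ_lt hi⟩ = ⟨j + 1, hj⟩ := by rw [e, M.1.ff]
          rw [h1] at e2
          rw [Fin.mk.injEq] at e2; omega
        have hMjp : (swapNC M j hj h2).1.f ⟨i, Nat.lt_of_succ_lt hi⟩ = ⟨i + 1, hi⟩ :=
          (sw_f_other M.1 (mk_ne (by omega)) (mk_ne (by omega)) hc1 hc2).trans h1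
        simp only [hone i hi M h1, hpos j hj M h2, map_add, map_neg,
          hone i hi (swapNC M j hj h2) hMjp]
        abel
    · by_cases h2 : M.1.f ⟨j, Nat.lt_of_succ_lt hj⟩ = ⟨j + 1, hj⟩
      · have hc1 : (⟨j, Nat.lt_of_succ_lt hj⟩ : Fin (2 * n)) ≠ M.1.f ⟨i, Nat.lt_of_succ_lt hi⟩ := by
          intro e
          have e2 : M.1.f ⟨j, Nat.lt_of_succ_lt hj⟩ = ⟨i, Nat.lt_of_succ_lt hi⟩ := by
            rw [e, M.1.ff]
          rw [h2] at e2
          rw [Fin.mk.injEq] at e2; omega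
        have hc2 : (⟨j, Nat.lt_of_succ_lt hj⟩ : Fin (2 * n)) ≠ M.1.f ⟨i + 1, hi⟩ := by
          intro e
          have e2 : M.1.f ⟨j, Nat.lt_of_succ_lt hj⟩ = ⟨i + 1, hi⟩ := by rw [e, M.1.ff]
          rw [h2] at e2
          rw [Fin.mk.injEq] at e2; omega
        have hMir : (swapNC M i hi h1).1.f ⟨j, Nat.lt_of_succ_lt hj⟩ = ⟨j + 1, hj⟩ :=
          (sw_f_other M.1 (mk_ne (by omega)) (mk_ne (by omega)) hc1 hc2).trans h2
        simp only [hone j hj M h2, hpos i hi M h1, map_add, map_neg,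
          hone j hj (swapNC M i hi h1) hMir]
        abel
      · by_cases hD : M.1.f ⟨i, Nat.lt_of_succ_lt hi⟩ = ⟨j + 1, hj⟩ ∧
            M.1.f ⟨i + 1, hi⟩ = ⟨j, Nat.lt_of_succ_lt hj⟩
        · -- nested configuration : both uncrossings coincide
          obtain ⟨hD1, hD2⟩ := hD
          have hcr : M.1.f ⟨j, Nat.lt_of_succ_lt hj⟩ = ⟨i + 1, hi⟩ := by rw [← hD2, M.1.ff]
          have hds : M.1.f ⟨j + 1, hj⟩ = ⟨i, Nat.lt_of_succ_lt hi⟩ := by rw [← hD1, M.1.ff]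
          have e1 : (swapNC M i hi h1).1.f ⟨j, Nat.lt_of_succ_lt hj⟩ = ⟨j + 1, hj⟩ :=
            ((congrArg _ hD2.symm).trans (sw_f_b M.1 (mk_ne (by omega)))).trans hD1
          have e2 : (swapNC M i hi h1).1.f (M.1.f ⟨j, Nat.lt_of_succ_lt hj⟩)
              = M.1.f ⟨j + 1, hj⟩ := by
            rw [hcr, hds]
            exact sw_f_q M.1 (mk_ne (by omega))
          have e3 : ∀ k, k ≠ ⟨j, Nat.lt_of_succ_lt hj⟩ → k ≠ ⟨j + 1, hj⟩ →
              k ≠ M.1.f ⟨j, Nat.lt_of_succ_lt hj⟩ → k ≠ M.1.f ⟨j + 1, hj⟩ →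
              (swapNC M i hi h1).1.f k = M.1.f k := by
            intro k k1 k2 k3 k4
            rw [hcr] at k3; rw [hds] at k4
            exact sw_f_other M.1 k4 k3 (fun e => k2 (e.trans hD1)) (fun e => k1 (e.trans hD2))
          simp only [hpos i hi M h1, map_add,
            hgen j hj M (swapNC M i hi h1) h2 e1 e2 e3,
            hone i hi (swapNC M i hi h1) (sw_f_p M.1 (mk_ne (by omega))),
            hone j hj (swapNC M i hi h1) e1, map_neg]
        · -- generic configuration : diamond
          have hx2 : ¬(M.1.f ⟨i, Nat.lt_of_succ_lt hi⟩ = ⟨j, Nat.lt_of_succ_lt hj⟩ ∧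
              M.1.f ⟨i + 1, hi⟩ = ⟨j + 1, hj⟩) := by
            rintro ⟨e1, e2⟩
            exact M.2 ⟨_, _, _, _, Fin.mk_lt_mk.mpr (by omega), Fin.mk_lt_mk.mpr (by omega),
              Fin.mk_lt_mk.mpr (by omega), e1, e2⟩
          obtain ⟨d1, d2, d3, d4, d5⟩ := diamond M.1
            (p := ⟨i, Nat.lt_of_succ_lt hi⟩) (q := ⟨i + 1, hi⟩)
            (r := ⟨j, Nat.lt_of_succ_lt hj⟩) (s := ⟨j + 1, hj⟩)
            (mk_ne (by omega)) (mk_ne (by omega)) (mk_ne (by omega)) (mk_ne (by omega))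
            (mk_ne (by omega)) (mk_ne (by omega)) h1 h2 hD hx2
          simp only [hpos i hi M h1, hpos j hj M h2, map_add,
            hpos i hi (swapNC M j hj h2) d1,
            hgen j hj (swapNC M i hi h1) (swapNC (swapNC M j hj h2) i hi d1) d2 d3 d4 d5]
          abel
  · -- braid relation
    intro i h
    apply hext
    intro M
    rw [LinearMap.comp_apply, LinearMap.comp_apply, LinearMap.comp_apply,
      LinearMap.comp_apply]
    have hPQ : (⟨i, Nat.lt_of_succ_lt (Nat.lt_of_succ_lt h)⟩ : Fin (2 * n))
        ≠ ⟨i + 1, Nat.lt_of_succ_lt h⟩ := mk_ne (by omega)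
    have hQR : (⟨i + 1, Nat.lt_of_succ_lt h⟩ : Fin (2 * n)) ≠ ⟨i + 1 + 1, h⟩ :=
      mk_ne (by omega)
    by_cases h1 : M.1.f ⟨i, Nat.lt_of_succ_lt (Nat.lt_of_succ_lt h)⟩
        = ⟨i + 1, Nat.lt_of_succ_lt h⟩
    · -- case {i, i+1} is a block
      have hbp : M.1.f ⟨i + 1, Nat.lt_of_succ_lt h⟩
          = ⟨i, Nat.lt_of_succ_lt (Nat.lt_of_succ_lt h)⟩ := by rw [← h1, M.1.ff]
      have h2 : M.1.f ⟨i + 1, Nat.lt_of_succ_lt h⟩ ≠ ⟨i + 1 + 1, h⟩ := by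
        rw [hbp]; exact mk_ne (by omega)
      have e0 : (swapNC M (i + 1) h h2).1.f ⟨i + 1, Nat.lt_of_succ_lt h⟩ = ⟨i + 1 + 1, h⟩ :=
        sw_f_p M.1 hQR
      have hcq : M.1.f ⟨i + 1 + 1, h⟩ ≠ ⟨i + 1, Nat.lt_of_succ_lt h⟩ :=
        fun e => h2 (by rw [← e, M.1.ff])
      have hM1P : (swapNC M (i + 1) h h2).1.f ⟨i, Nat.lt_of_succ_lt (Nat.lt_of_succ_lt h)⟩
          = M.1.f ⟨i + 1 + 1, h⟩ :=
        (congrArg _ hbp.symm).trans (sw_f_a M.1 hQR)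
      have hne1 : (swapNC M (i + 1) h h2).1.f ⟨i, Nat.lt_of_succ_lt (Nat.lt_of_succ_lt h)⟩
          ≠ ⟨i + 1, Nat.lt_of_succ_lt h⟩ := fun e => hcq (hM1P.symm.trans e)
      have c2 : M.1.f ((swapNC M (i + 1) h h2).1.f ⟨i, Nat.lt_of_succ_lt (Nat.lt_of_succ_lt h)⟩)
          = (swapNC M (i + 1) h h2).1.f ⟨i + 1, Nat.lt_of_succ_lt h⟩ :=
        ((congrArg _ hM1P).trans (M.1.ff _)).trans e0.symm
      have c3 : ∀ k, k ≠ ⟨i, Nat.lt_of_succ_lt (Nat.lt_of_succ_lt h)⟩ →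
          k ≠ ⟨i + 1, Nat.lt_of_succ_lt h⟩ →
          k ≠ (swapNC M (i + 1) h h2).1.f ⟨i, Nat.lt_of_succ_lt (Nat.lt_of_succ_lt h)⟩ →
          k ≠ (swapNC M (i + 1) h h2).1.f ⟨i + 1, Nat.lt_of_succ_lt h⟩ →
          M.1.f k = (swapNC M (i + 1) h h2).1.f k := by
        intro k k1 k2 k3 k4
        exact (sw_f_other M.1 k2 (fun e => k4 (e.trans e0.symm))
          (fun e => k1 (e.trans hbp)) (fun e => k3 (e.trans hM1P.symm))).symm
      simp only [hone i (Nat.lt_of_succ_lt h) M h1, hpos (i + 1) h M h2, map_add, map_neg,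
        hgen i (Nat.lt_of_succ_lt h) (swapNC M (i + 1) h h2) M hne1 h1 c2 c3,
        hone (i + 1) h (swapNC M (i + 1) h h2) e0]
      abel
    · by_cases h2 : M.1.f ⟨i + 1, Nat.lt_of_succ_lt h⟩ = ⟨i + 1 + 1, h⟩
      · -- case {i+1, i+2} is a block
        have e0 : (swapNC M i (Nat.lt_of_succ_lt h) h1).1.f
            ⟨i, Nat.lt_of_succ_lt (Nat.lt_of_succ_lt h)⟩ = ⟨i + 1, Nat.lt_of_succ_lt h⟩ :=
          sw_f_p M.1 hPQ
        have eMq : (swapNC M i (Nat.lt_of_succ_lt h) h1).1.f ⟨i + 1, Nat.lt_of_succ_lt h⟩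
            = ⟨i, Nat.lt_of_succ_lt (Nat.lt_of_succ_lt h)⟩ := sw_f_q M.1 hPQ
        have e1 : (swapNC M i (Nat.lt_of_succ_lt h) h1).1.f ⟨i + 1 + 1, h⟩
            = M.1.f ⟨i, Nat.lt_of_succ_lt (Nat.lt_of_succ_lt h)⟩ :=
          (congrArg _ h2.symm).trans (sw_f_b M.1 hPQ)
        have hne : (swapNC M i (Nat.lt_of_succ_lt h) h1).1.f ⟨i + 1, Nat.lt_of_succ_lt h⟩
            ≠ ⟨i + 1 + 1, h⟩ := fun e =>
          (mk_ne (show i ≠ i + 1 + 1 by omega) :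
            (⟨i, Nat.lt_of_succ_lt (Nat.lt_of_succ_lt h)⟩ : Fin (2 * n)) ≠ ⟨i + 1 + 1, h⟩)
            (eMq.symm.trans e)
        have c2' : M.1.f ((swapNC M i (Nat.lt_of_succ_lt h) h1).1.f
              ⟨i + 1, Nat.lt_of_succ_lt h⟩)
            = (swapNC M i (Nat.lt_of_succ_lt h) h1).1.f ⟨i + 1 + 1, h⟩ :=
          (congrArg _ eMq).trans e1.symm
        have c3' : ∀ k, k ≠ ⟨i + 1, Nat.lt_of_succ_lt h⟩ → k ≠ ⟨i + 1 + 1, h⟩ →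
            k ≠ (swapNC M i (Nat.lt_of_succ_lt h) h1).1.f ⟨i + 1, Nat.lt_of_succ_lt h⟩ →
            k ≠ (swapNC M i (Nat.lt_of_succ_lt h) h1).1.f ⟨i + 1 + 1, h⟩ →
            M.1.f k = (swapNC M i (Nat.lt_of_succ_lt h) h1).1.f k := by
          intro k k1 k2 k3 k4
          exact (sw_f_other M.1 (fun e => k3 (e.trans eMq.symm)) k1
            (fun e => k4 (e.trans e1.symm)) (fun e => k2 (e.trans h2))).symm
        simp only [hpos i (Nat.lt_of_succ_lt h) M h1, hone (i + 1) h M h2, map_add, map_neg,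
          hgen (i + 1) h (swapNC M i (Nat.lt_of_succ_lt h) h1) M hne h2 c2' c3',
          hone i (Nat.lt_of_succ_lt h) (swapNC M i (Nat.lt_of_succ_lt h) h1) e0]
        abel
      · -- generic case
        have hQP : M.1.f ⟨i + 1, Nat.lt_of_succ_lt h⟩
            ≠ ⟨i, Nat.lt_of_succ_lt (Nat.lt_of_succ_lt h)⟩ :=
          fun e => h1 (by rw [← e, M.1.ff])
        have hRQ : M.1.f ⟨i + 1 + 1, h⟩ ≠ ⟨i + 1, Nat.lt_of_succ_lt h⟩ :=
          fun e => h2 (by rw [← e, M.1.ff])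
        have haR : M.1.f ⟨i, Nat.lt_of_succ_lt (Nat.lt_of_succ_lt h)⟩ ≠ ⟨i + 1 + 1, h⟩ :=
          no_short_arc M.1 M.2 (q := ⟨i + 1, Nat.lt_of_succ_lt h⟩) rfl rfl
        have hRP : M.1.f ⟨i + 1 + 1, h⟩ ≠ ⟨i, Nat.lt_of_succ_lt (Nat.lt_of_succ_lt h)⟩ :=
          fun e => haR (by rw [← e, M.1.ff])
        -- the matchings A and B
        have eAp : (swapNC M i (Nat.lt_of_succ_lt h) h1).1.f
            ⟨i, Nat.lt_of_succ_lt (Nat.lt_of_succ_lt h)⟩ = ⟨i + 1, Nat.lt_of_succ_lt h⟩ :=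
          sw_f_p M.1 hPQ
        have eAq : (swapNC M i (Nat.lt_of_succ_lt h) h1).1.f ⟨i + 1, Nat.lt_of_succ_lt h⟩
            = ⟨i, Nat.lt_of_succ_lt (Nat.lt_of_succ_lt h)⟩ := sw_f_q M.1 hPQ
        have eAr : (swapNC M i (Nat.lt_of_succ_lt h) h1).1.f ⟨i + 1 + 1, h⟩
            = M.1.f ⟨i + 1 + 1, h⟩ :=
          sw_f_other M.1 (mk_ne (by omega)) (mk_ne (by omega))
            (fun e => haR e.symm) (fun e => h2 e.symm)
        have eAc : (swapNC M i (Nat.lt_of_succ_lt h) h1).1.f (M.1.f ⟨i + 1 + 1, h⟩)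
            = ⟨i + 1 + 1, h⟩ :=
          (sw_f_other M.1 hRP hRQ
            (fun e => (mk_ne (show i + 1 + 1 ≠ i by omega) :
              (⟨i + 1 + 1, h⟩ : Fin (2 * n)) ≠ ⟨i, Nat.lt_of_succ_lt (Nat.lt_of_succ_lt h)⟩)
              (M.1.f_inj_s10 e))
            (fun e => hQR (M.1.f_inj_s10 e).symm)).trans (M.1.ff _)
        have eBq : (swapNC M (i + 1) h h2).1.f ⟨i + 1, Nat.lt_of_succ_lt h⟩
            = ⟨i + 1 + 1, h⟩ := sw_f_p M.1 hQR
        have eBr : (swapNC M (i + 1) h h2).1.f ⟨i + 1 + 1, h⟩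
            = ⟨i + 1, Nat.lt_of_succ_lt h⟩ := sw_f_q M.1 hQR
        have eBp : (swapNC M (i + 1) h h2).1.f ⟨i, Nat.lt_of_succ_lt (Nat.lt_of_succ_lt h)⟩
            = M.1.f ⟨i, Nat.lt_of_succ_lt (Nat.lt_of_succ_lt h)⟩ :=
          sw_f_other M.1 (mk_ne (by omega)) (mk_ne (by omega))
            (fun e => hQP e.symm) (fun e => hRP e.symm)
        have eBa : (swapNC M (i + 1) h h2).1.f
            (M.1.f ⟨i, Nat.lt_of_succ_lt (Nat.lt_of_succ_lt h)⟩)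
            = ⟨i, Nat.lt_of_succ_lt (Nat.lt_of_succ_lt h)⟩ :=
          (sw_f_other M.1 h1 haR
            (fun e => hPQ (M.1.f_inj_s10 e))
            (fun e => (mk_ne (show i ≠ i + 1 + 1 by omega) :
              (⟨i, Nat.lt_of_succ_lt (Nat.lt_of_succ_lt h)⟩ : Fin (2 * n)) ≠ ⟨i + 1 + 1, h⟩)
              (M.1.f_inj_s10 e))).trans (M.1.ff _)
        have hBPne : (swapNC M (i + 1) h h2).1.f
            ⟨i, Nat.lt_of_succ_lt (Nat.lt_of_succ_lt h)⟩ ≠ ⟨i + 1, Nat.lt_of_succ_lt h⟩ :=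
          fun e => h1 (eBp.symm.trans e)
        have hACne : (swapNC M i (Nat.lt_of_succ_lt h) h1).1.f ⟨i + 1, Nat.lt_of_succ_lt h⟩
            ≠ ⟨i + 1 + 1, h⟩ :=
          fun e => (mk_ne (show i ≠ i + 1 + 1 by omega) :
            (⟨i, Nat.lt_of_succ_lt (Nat.lt_of_succ_lt h)⟩ : Fin (2 * n)) ≠ ⟨i + 1 + 1, h⟩)
            (eAq.symm.trans e)
        -- C := swapNC A (i+1), D := swapNC B i
        have eCq : (swapNC (swapNC M i (Nat.lt_of_succ_lt h) h1) (i + 1) h hACne).1.f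
            ⟨i + 1, Nat.lt_of_succ_lt h⟩ = ⟨i + 1 + 1, h⟩ :=
          sw_f_p (swapNC M i (Nat.lt_of_succ_lt h) h1).1 hQR
        have eCP : (swapNC (swapNC M i (Nat.lt_of_succ_lt h) h1) (i + 1) h hACne).1.f
            ⟨i, Nat.lt_of_succ_lt (Nat.lt_of_succ_lt h)⟩ = M.1.f ⟨i + 1 + 1, h⟩ :=
          ((congrArg _ eAq.symm).trans
            (sw_f_a (swapNC M i (Nat.lt_of_succ_lt h) h1).1 hQR)).trans eAr
        have hCPne : (swapNC (swapNC M i (Nat.lt_of_succ_lt h) h1) (i + 1) h hACne).1.f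
            ⟨i, Nat.lt_of_succ_lt (Nat.lt_of_succ_lt h)⟩ ≠ ⟨i + 1, Nat.lt_of_succ_lt h⟩ :=
          fun e => hRQ (eCP.symm.trans e)
        have c2c : (swapNC M i (Nat.lt_of_succ_lt h) h1).1.f
            ((swapNC (swapNC M i (Nat.lt_of_succ_lt h) h1) (i + 1) h hACne).1.f
              ⟨i, Nat.lt_of_succ_lt (Nat.lt_of_succ_lt h)⟩)
            = (swapNC (swapNC M i (Nat.lt_of_succ_lt h) h1) (i + 1) h hACne).1.f
              ⟨i + 1, Nat.lt_of_succ_lt h⟩ :=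
          ((congrArg _ eCP).trans eAc).trans eCq.symm
        have c3c : ∀ k, k ≠ ⟨i, Nat.lt_of_succ_lt (Nat.lt_of_succ_lt h)⟩ →
            k ≠ ⟨i + 1, Nat.lt_of_succ_lt h⟩ →
            k ≠ (swapNC (swapNC M i (Nat.lt_of_succ_lt h) h1) (i + 1) h hACne).1.f
              ⟨i, Nat.lt_of_succ_lt (Nat.lt_of_succ_lt h)⟩ →
            k ≠ (swapNC (swapNC M i (Nat.lt_of_succ_lt h) h1) (i + 1) h hACne).1.f
              ⟨i + 1, Nat.lt_of_succ_lt h⟩ →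
            (swapNC M i (Nat.lt_of_succ_lt h) h1).1.f k
              = (swapNC (swapNC M i (Nat.lt_of_succ_lt h) h1) (i + 1) h hACne).1.f k := by
          intro k k1 k2 k3 k4
          exact (sw_f_other (swapNC M i (Nat.lt_of_succ_lt h) h1).1 k2
            (fun e => k4 (e.trans eCq.symm))
            (fun e => k1 (e.trans eAq))
            (fun e => k3 (e.trans (eAr.trans eCP.symm)))).symm
        have eDq : (swapNC (swapNC M (i + 1) h h2) i (Nat.lt_of_succ_lt h) hBPne).1.f
            ⟨i + 1, Nat.lt_of_succ_lt h⟩ = ⟨i, Nat.lt_of_succ_lt (Nat.lt_of_succ_lt h)⟩ :=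
          sw_f_q (swapNC M (i + 1) h h2).1 hPQ
        have eDr : (swapNC (swapNC M (i + 1) h h2) i (Nat.lt_of_succ_lt h) hBPne).1.f
            ⟨i + 1 + 1, h⟩ = M.1.f ⟨i, Nat.lt_of_succ_lt (Nat.lt_of_succ_lt h)⟩ :=
          ((congrArg _ eBq.symm).trans
            (sw_f_b (swapNC M (i + 1) h h2).1 hPQ)).trans eBp
        have hDQne : (swapNC (swapNC M (i + 1) h h2) i (Nat.lt_of_succ_lt h) hBPne).1.f
            ⟨i + 1, Nat.lt_of_succ_lt h⟩ ≠ ⟨i + 1 + 1, h⟩ :=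
          fun e => (mk_ne (show i ≠ i + 1 + 1 by omega) :
            (⟨i, Nat.lt_of_succ_lt (Nat.lt_of_succ_lt h)⟩ : Fin (2 * n)) ≠ ⟨i + 1 + 1, h⟩)
            (eDq.symm.trans e)
        have c2d : (swapNC M (i + 1) h h2).1.f
            ((swapNC (swapNC M (i + 1) h h2) i (Nat.lt_of_succ_lt h) hBPne).1.f
              ⟨i + 1, Nat.lt_of_succ_lt h⟩)
            = (swapNC (swapNC M (i + 1) h h2) i (Nat.lt_of_succ_lt h) hBPne).1.f
              ⟨i + 1 + 1, h⟩ :=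
          ((congrArg _ eDq).trans eBp).trans eDr.symm
        have c3d : ∀ k, k ≠ ⟨i + 1, Nat.lt_of_succ_lt h⟩ → k ≠ ⟨i + 1 + 1, h⟩ →
            k ≠ (swapNC (swapNC M (i + 1) h h2) i (Nat.lt_of_succ_lt h) hBPne).1.f
              ⟨i + 1, Nat.lt_of_succ_lt h⟩ →
            k ≠ (swapNC (swapNC M (i + 1) h h2) i (Nat.lt_of_succ_lt h) hBPne).1.f
              ⟨i + 1 + 1, h⟩ →
            (swapNC M (i + 1) h h2).1.f k
              = (swapNC (swapNC M (i + 1) h h2) i (Nat.lt_of_succ_lt h) hBPne).1.f k := by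
          intro k k1 k2 k3 k4
          exact (sw_f_other (swapNC M (i + 1) h h2).1
            (fun e => k3 (e.trans eDq.symm)) k1
            (fun e => k4 (e.trans (eBp.trans eDr.symm)))
            (fun e => k2 (e.trans eBq))).symm
        simp only [hpos i (Nat.lt_of_succ_lt h) M h1, hpos (i + 1) h M h2, map_add, map_neg,
          hone i (Nat.lt_of_succ_lt h) (swapNC M i (Nat.lt_of_succ_lt h) h1) eAp,
          hone (i + 1) h (swapNC M (i + 1) h h2) eBq,
          hpos (i + 1) h (swapNC M i (Nat.lt_of_succ_lt h) h1) hACne,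
          hpos i (Nat.lt_of_succ_lt h) (swapNC M (i + 1) h h2) hBPne,
          hgen i (Nat.lt_of_succ_lt h)
            (swapNC (swapNC M i (Nat.lt_of_succ_lt h) h1) (i + 1) h hACne)
            (swapNC M i (Nat.lt_of_succ_lt h) h1) hCPne eAp c2c c3c,
          hgen (i + 1) h
            (swapNC (swapNC M (i + 1) h h2) i (Nat.lt_of_succ_lt h) hBPne)
            (swapNC M (i + 1) h h2) hDQne eBq c2d c3d]
        abel
end
end

section
/- If M is a noncrossing perfect matching of {1,...,2n} and {i,i+1} is not a block of M, with a ∼ i and b ∼ i+1 in M, then the matching M' obtained from M by replacing {a,i} and {b,i+1} with {a,b} and {i,i+1} is again a noncrossing perfect matching. -/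
open MvPolynomial Finset

noncomputable section

theorem uncross_adjacent_noncrossing (n : ℕ) (M : PM n) (hM : Noncrossing M)
    (i j : Fin (2 * n)) (hij : (j : ℕ) = (i : ℕ) + 1) (h : M.f i ≠ j) :
    ∃ M' : PM n, Noncrossing M' ∧ M'.f i = j ∧ M'.f (M.f i) = M.f j ∧
      ∀ k, k ≠ i → k ≠ j → k ≠ M.f i → k ≠ M.f j → M'.f k = M.f k := by
  have hfa : M.f (M.f i) = i := M.invol i
  have hfb : M.f (M.f j) = j := M.invol j
  set a := M.f i with ha
  set b := M.f j with hb
  have hijne : i ≠ j := fun e => by rw [e] at hij; omega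
  have hai : a ≠ i := M.nofix i
  have haj : a ≠ j := h
  have hbj : b ≠ j := M.nofix j
  have hbi : b ≠ i := fun e => h (by rw [ha, ← e]; exact hfb)
  have hab : a ≠ b := fun e => hijne (by rw [← hfa, e]; exact hfb)
  have nai : (a : ℕ) ≠ i := fun e => hai (Fin.val_injective e)
  have naj : (a : ℕ) ≠ j := fun e => haj (Fin.val_injective e)
  have nbi : (b : ℕ) ≠ i := fun e => hbi (Fin.val_injective e)
  have nbj : (b : ℕ) ≠ j := fun e => hbj (Fin.val_injective e)
  have nab : (a : ℕ) ≠ b := fun e => hab (Fin.val_injective e)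
  -- position trichotomy for a and b relative to the adjacent pair i, j
  have hA : (a : ℕ) < i ∨ (j : ℕ) < a := by omega
  have hB : (b : ℕ) < i ∨ (j : ℕ) < b := by omega
  have hC : ¬ ((a : ℕ) < b ∧ (b : ℕ) < i) := by
    rintro ⟨u1, u2⟩
    exact hM ⟨a, b, i, j, Fin.lt_def.mpr u1, Fin.lt_def.mpr u2,
      Fin.lt_def.mpr (by omega), hfa, hfb⟩
  have hD : ¬ ((j : ℕ) < a ∧ (a : ℕ) < b) := by
    rintro ⟨u1, u2⟩
    exact hM ⟨i, j, a, b, Fin.lt_def.mpr (by omega), Fin.lt_def.mpr u1,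
      Fin.lt_def.mpr u2, ha.symm, hb.symm⟩
  have hE : ¬ ((b : ℕ) < i ∧ (j : ℕ) < a) := by
    rintro ⟨u1, u2⟩
    exact hM ⟨b, i, j, a, Fin.lt_def.mpr u1, Fin.lt_def.mpr (by omega),
      Fin.lt_def.mpr u2, hfb, ha.symm⟩
  have htri : ((a : ℕ) < i ∧ (j : ℕ) < b) ∨ ((b : ℕ) < a ∧ (a : ℕ) < i) ∨
      ((j : ℕ) < b ∧ (b : ℕ) < a) := by
    rcases hA with h1 | h1 <;> rcases hB with h2 | h2
    · refine Or.inr (Or.inl ⟨?_, h1⟩); have := fun u => hC ⟨u, h2⟩; omega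
    · exact Or.inl ⟨h1, h2⟩
    · exact absurd ⟨h2, h1⟩ hE
    · refine Or.inr (Or.inr ⟨h2, ?_⟩); have := fun u => hD ⟨h1, u⟩; omega
  -- the uncrossed matching
  set σ := Equiv.swap j a with hσdef
  have hσi : σ i = i := Equiv.swap_apply_of_ne_of_ne hijne (Ne.symm hai)
  have hσj : σ j = a := Equiv.swap_apply_left j a
  have hσa : σ a = j := Equiv.swap_apply_right j a
  have hσb : σ b = b := Equiv.swap_apply_of_ne_of_ne hbj (Ne.symm hab)
  let g : Fin (2 * n) → Fin (2 * n) := fun k => σ (M.f (σ k))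
  have hgi : g i = j := by show σ (M.f (σ i)) = j; rw [hσi, ← ha, hσa]
  have hgj : g j = i := by show σ (M.f (σ j)) = i; rw [hσj, hfa, hσi]
  have hga : g a = b := by show σ (M.f (σ a)) = b; rw [hσa, ← hb, hσb]
  have hgb : g b = a := by show σ (M.f (σ b)) = a; rw [hσb, hfb, hσj]
  have hgo : ∀ k, k ≠ i → k ≠ j → k ≠ a → k ≠ b → g k = M.f k := by
    intro k k1 k2 k3 k4
    have e1 : σ k = k := Equiv.swap_apply_of_ne_of_ne k2 k3
    have e2 : M.f k ≠ j := fun e => k4 (by rw [← M.invol k, e])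
    have e3 : M.f k ≠ a := fun e => k1 (by rw [← M.invol k, e]; exact hfa)
    show σ (M.f (σ k)) = M.f k
    rw [e1, Equiv.swap_apply_of_ne_of_ne e2 e3]
  have hinv : ∀ k, g (g k) = k := by
    intro k
    show σ (M.f (σ (σ (M.f (σ k))))) = k
    rw [Equiv.swap_apply_self, M.invol, Equiv.swap_apply_self]
  have hnofix : ∀ k, g k ≠ k := by
    intro k e
    have e0 : σ (M.f (σ k)) = k := e
    have e1 := congrArg σ e0
    rw [Equiv.swap_apply_self] at e1
    exact M.nofix _ e1
  refine ⟨⟨g, hinv, hnofix⟩, ?_, hgi, hga, hgo⟩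
  rintro ⟨p, q, r, s, o1, o2, o3, hp, hq⟩
  have hp' : g p = r := hp
  have hq' : g q = s := hq
  have m1 : (p : ℕ) < q := Fin.lt_def.mp o1
  have m2 : (q : ℕ) < r := Fin.lt_def.mp o2
  have m3 : (r : ℕ) < s := Fin.lt_def.mp o3
  -- q cannot be i or j
  rcases eq_or_ne q i with hqi | hqi
  · have hs : s = j := by rw [hqi, hgi] at hq'; exact hq'.symm
    have e1 : (q : ℕ) = i := congrArg Fin.val hqi
    have e2 : (s : ℕ) = j := congrArg Fin.val hs
    omega
  rcases eq_or_ne q j with hqj | hqj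
  · have hs : s = i := by rw [hqj, hgj] at hq'; exact hq'.symm
    have e1 : (q : ℕ) = j := congrArg Fin.val hqj
    have e2 : (s : ℕ) = i := congrArg Fin.val hs
    omega
  -- p cannot be i or j
  rcases eq_or_ne p i with hpi | hpi
  · have hr : r = j := by rw [hpi, hgi] at hp'; exact hp'.symm
    have e1 : (p : ℕ) = i := congrArg Fin.val hpi
    have e2 : (r : ℕ) = j := congrArg Fin.val hr
    omega
  rcases eq_or_ne p j with hpj | hpj
  · have hr : r = i := by rw [hpj, hgj] at hp'; exact hp'.symm
    have e1 : (p : ℕ) = j := congrArg Fin.val hpj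
    have e2 : (r : ℕ) = i := congrArg Fin.val hr
    omega
  rcases eq_or_ne p a with hpa | hpa
  · -- block {p, r} is {a, b} with p = a, r = b
    have hrb : r = b := by rw [hpa, hga] at hp'; exact hp'.symm
    have np : (p : ℕ) = a := congrArg Fin.val hpa
    have nr : (r : ℕ) = b := congrArg Fin.val hrb
    have hqa : q ≠ a := fun e => by have := congrArg Fin.val e; omega
    have hqb : q ≠ b := fun e => by have := congrArg Fin.val e; omega
    have hq2 : M.f q = s := by rw [← hgo q hqi hqj hqa hqb]; exact hq'
    have nqi : (q : ℕ) ≠ i := fun e => hqi (Fin.val_injective e)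
    have nqj : (q : ℕ) ≠ j := fun e => hqj (Fin.val_injective e)
    rcases htri with ⟨c1, c2⟩ | ⟨c1, c2⟩ | ⟨c1, c2⟩
    · rcases Nat.lt_or_ge (q : ℕ) i with hc | hc
      · exact hM ⟨a, q, i, s, Fin.lt_def.mpr (by omega), Fin.lt_def.mpr (by omega),
          Fin.lt_def.mpr (by omega), hfa, hq2⟩
      · exact hM ⟨j, q, b, s, Fin.lt_def.mpr (by omega), Fin.lt_def.mpr (by omega),
          Fin.lt_def.mpr (by omega), hb.symm, hq2⟩
    · omega
    · omega
  rcases eq_or_ne p b with hpb | hpb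
  · -- block {p, r} is {a, b} with p = b, r = a
    have hra : r = a := by rw [hpb, hgb] at hp'; exact hp'.symm
    have np : (p : ℕ) = b := congrArg Fin.val hpb
    have nr : (r : ℕ) = a := congrArg Fin.val hra
    have hqa : q ≠ a := fun e => by have := congrArg Fin.val e; omega
    have hqb : q ≠ b := fun e => by have := congrArg Fin.val e; omega
    have hq2 : M.f q = s := by rw [← hgo q hqi hqj hqa hqb]; exact hq'
    have hsi : s ≠ i := fun e => hqa (by rw [← M.invol q, hq2, e])
    have hsj : s ≠ j := fun e => hqb (by rw [← M.invol q, hq2, e])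
    have nsi : (s : ℕ) ≠ i := fun e => hsi (Fin.val_injective e)
    have nsj : (s : ℕ) ≠ j := fun e => hsj (Fin.val_injective e)
    rcases htri with ⟨c1, c2⟩ | ⟨c1, c2⟩ | ⟨c1, c2⟩
    · omega
    · rcases Nat.lt_or_ge (s : ℕ) i with hc | hc
      · exact hM ⟨q, a, s, i, Fin.lt_def.mpr (by omega), Fin.lt_def.mpr (by omega),
          Fin.lt_def.mpr (by omega), hq2, hfa⟩
      · exact hM ⟨b, q, j, s, Fin.lt_def.mpr (by omega), Fin.lt_def.mpr (by omega),
          Fin.lt_def.mpr (by omega), hfb, hq2⟩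
    · exact hM ⟨i, q, a, s, Fin.lt_def.mpr (by omega), Fin.lt_def.mpr (by omega),
        Fin.lt_def.mpr (by omega), ha.symm, hq2⟩
  -- now {p, r} is an old block of M
  have hp2 : M.f p = r := by rw [← hgo p hpi hpj hpa hpb]; exact hp'
  rcases eq_or_ne q a with hqa | hqa
  · -- block {q, s} is {a, b} with q = a, s = b
    have hsb : s = b := by rw [hqa, hga] at hq'; exact hq'.symm
    have nq : (q : ℕ) = a := congrArg Fin.val hqa
    have ns : (s : ℕ) = b := congrArg Fin.val hsb
    have hri : r ≠ i := fun e => hpa (by rw [← M.invol p, hp2, e])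
    have hrj : r ≠ j := fun e => hpb (by rw [← M.invol p, hp2, e])
    have nri : (r : ℕ) ≠ i := fun e => hri (Fin.val_injective e)
    have nrj : (r : ℕ) ≠ j := fun e => hrj (Fin.val_injective e)
    rcases htri with ⟨c1, c2⟩ | ⟨c1, c2⟩ | ⟨c1, c2⟩
    · rcases Nat.lt_or_ge (r : ℕ) i with hc | hc
      · exact hM ⟨p, a, r, i, Fin.lt_def.mpr (by omega), Fin.lt_def.mpr (by omega),
          Fin.lt_def.mpr (by omega), hp2, hfa⟩
      · exact hM ⟨p, j, r, b, Fin.lt_def.mpr (by omega), Fin.lt_def.mpr (by omega),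
          Fin.lt_def.mpr (by omega), hp2, hb.symm⟩
    · omega
    · omega
  rcases eq_or_ne q b with hqb | hqb
  · -- block {q, s} is {a, b} with q = b, s = a
    have hsa : s = a := by rw [hqb, hgb] at hq'; exact hq'.symm
    have nq : (q : ℕ) = b := congrArg Fin.val hqb
    have ns : (s : ℕ) = a := congrArg Fin.val hsa
    have npi : (p : ℕ) ≠ i := fun e => hpi (Fin.val_injective e)
    have npj : (p : ℕ) ≠ j := fun e => hpj (Fin.val_injective e)
    rcases htri with ⟨c1, c2⟩ | ⟨c1, c2⟩ | ⟨c1, c2⟩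
    · omega
    · exact hM ⟨p, b, r, j, Fin.lt_def.mpr (by omega), Fin.lt_def.mpr (by omega),
        Fin.lt_def.mpr (by omega), hp2, hfb⟩
    · rcases Nat.lt_or_ge (p : ℕ) i with hc | hc
      · exact hM ⟨p, i, r, a, Fin.lt_def.mpr (by omega), Fin.lt_def.mpr (by omega),
          Fin.lt_def.mpr (by omega), hp2, ha.symm⟩
      · exact hM ⟨j, p, b, r, Fin.lt_def.mpr (by omega), Fin.lt_def.mpr (by omega),
          Fin.lt_def.mpr (by omega), hb.symm, hp2⟩
  · -- both blocks are old blocks of M: contradiction with noncrossingness of M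
    have hq2 : M.f q = s := by rw [← hgo q hqi hqj hqa hqb]; exact hq'
    exact hM ⟨p, q, r, s, o1, o2, o3, hp2, hq2⟩
end
end
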